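/- arXiv:1906.04084 — 3 statements merged into one kernel-verified Lean document; each statement's English description precedes it below -/
import Mathlib

section
/- Let s, k ≥ 2 be integers, 1 ≤ ℓ_1,…,ℓ_s ≤ k, ℓ = ℓ_1 + … + ℓ_s, L ≥ 1 a real, and let v_1,…,v_s be vertices of a graph G. Suppose there is a set 𝒯 of at least f(ℓ,L)/2 L-admissible spiders in G with length vector (ℓ_1,…,ℓ_s) and leaf vector (v_1,…,v_s). Then 𝒯 contains at least f(ℓ−1,L)^{16}/2 spiders which are pairwise vertex-disjoint apart from their leaves. -/
open Finset Filter

noncomputable section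

namespace ExtremalSubdivision

universe u

/-- `Contains G H` means that the graph `G` contains a copy of the graph `H` as a subgraph. -/
def Contains {V : Type*} {W : Type*} (G : SimpleGraph V) (H : SimpleGraph W) : Prop :=
  ∃ f : H →g G, Function.Injective f

/-- `exNum n H` is the extremal number of `H` : the maximum number of edges in a graph on
`n` vertices containing no copy of `H`. -/
def exNum {W : Type*} (n : ℕ) (H : SimpleGraph W) : ℕ :=
  sSup {m : ℕ | ∃ G : SimpleGraph (Fin n), ¬Contains G H ∧ m = G.edgeSet.ncard}

/-- The `a`-th vertex on the subdivided path joining `i` (on the left side) to `j`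
(on the right side), `0 ≤ a ≤ k`, in the `k`-subdivision of `K_{s,t}`. -/
def subdivVtx (s t k : ℕ) (i : Fin s) (j : Fin t) (a : ℕ) :
    Fin s ⊕ Fin t ⊕ Fin s × Fin t × Fin (k - 1) :=
  if h0 : a = 0 then Sum.inl i
  else if h : a < k then Sum.inr (Sum.inr (i, j, ⟨a - 1, by omega⟩))
  else Sum.inr (Sum.inl j)

/-- The `k`-subdivision of the complete bipartite graph `K_{s,t}` : every edge `ij` of
`K_{s,t}` is replaced by a path of length `k`, internally vertex-disjoint from the others. -/
def KstSubdiv (s t k : ℕ) :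
    SimpleGraph (Fin s ⊕ Fin t ⊕ Fin s × Fin t × Fin (k - 1)) :=
  SimpleGraph.fromRel fun x y => ∃ (i : Fin s) (j : Fin t) (a : ℕ),
    a < k ∧ x = subdivVtx s t k i j a ∧ y = subdivVtx s t k i j (a + 1)

/-- A graph is `K`-almost-regular if its maximum degree is at most `K` times its
minimum degree. -/
def IsAlmostRegular {V : Type*} (G : SimpleGraph V) (K : ℝ) : Prop :=
  ∀ v w : V, ((G.neighborSet v).ncard : ℝ) ≤ K * ((G.neighborSet w).ncard : ℝ)

/-- The minimum degree of a graph. -/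
def minDeg {V : Type*} (G : SimpleGraph V) : ℕ :=
  sInf (Set.range fun v => (G.neighborSet v).ncard)

/-- Fuelled version of the function `f(ℓ, L)`. -/
def fAux (L : ℝ) : ℕ → ℕ → ℝ
  | 0, _ => L
  | _ + 1, 0 => L
  | _ + 1, 1 => L
  | fuel + 1, n + 2 =>
      1 + fAux L fuel (n + 1) ^ 16 * ((n : ℝ) + 1) ^ 2 *
        ⨆ i : Fin (n + 1), fAux L fuel (i.1 + 1) * fAux L fuel (n + 1 - i.1)

/-- The function `f(ℓ, L)` : `f(1, L) = L` and
`f(ℓ, L) = 1 + f(ℓ-1, L)^16 (ℓ-1)^2 max_{1 ≤ i ≤ ℓ-1} f(i, L) f(ℓ-i, L)`. -/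
def fJ (L : ℝ) (n : ℕ) : ℝ := fAux L n n

/-- A list of vertices is a path in `G` if consecutive entries are adjacent and there are
no repetitions. (A path of length `ℓ` is a list of `ℓ + 1` vertices.) -/
def IsPathLst {V : Type*} (G : SimpleGraph V) (p : List V) : Prop :=
  p.Chain' G.Adj ∧ p.Nodup

/-- `q` is an `L`-admissible path of length `n`, where `good m r` is the statement that the
path `r` of length `m` is `L`-good: `q` is a path of length `n` each of whose proper subpaths
is `L`-good. -/
def pathAdmWith {V : Type*} (G : SimpleGraph V) (good : ℕ → List V → Prop)
    (n : ℕ) (q : List V) : Prop :=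
  IsPathLst G q ∧ q.length = n + 1 ∧
    ∀ m, 1 ≤ m → m < n → ∀ r, r <:+: q → r.length = m + 1 → good m r

/-- Fuelled version of `L`-goodness for paths: a path of length `n` is `L`-good if it is
`L`-admissible and the number of `L`-admissible paths of length `n` between its endpoints
is at most `f(n, L)`. -/
def pathGoodAux {V : Type*} (G : SimpleGraph V) (L : ℝ) : ℕ → ℕ → List V → Prop
  | 0, _, _ => True
  | fuel + 1, n, p =>
      pathAdmWith G (fun m r => pathGoodAux G L fuel m r) n p ∧
      (({q : List V | pathAdmWith G (fun m r => pathGoodAux G L fuel m r) n q ∧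
          q.head? = p.head? ∧ q.getLast? = p.getLast?}).ncard : ℝ) ≤ fJ L n

/-- The path `p` (a list of at least two vertices) is `L`-good. -/
def PathGood {V : Type*} (G : SimpleGraph V) (L : ℝ) (p : List V) : Prop :=
  2 ≤ p.length ∧ pathGoodAux G L p.length (p.length - 1) p

/-- The path `p` (a list of at least two vertices) is `L`-admissible. -/
def PathAdmissible {V : Type*} (G : SimpleGraph V) (L : ℝ) (p : List V) : Prop :=
  2 ≤ p.length ∧ pathAdmWith G (fun m r => pathGoodAux G L (m + 1) m r) (p.length - 1) p

/-- An (ordered, generalised) `s`-legged spider is recorded as a pair `S = (u, P)` where `u`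
is the centre and `P i` is the `i`-th leg: a path starting at `u` (given as the list of its
vertices, the first one being `u`). `SpiderShape G S` says that this data indeed defines a
spider in `G`: each leg is a path starting at the centre, and two distinct legs share no
vertex other than the centre. (A leg of length `0` is just the one-element list `[u]`.) -/
def SpiderShape {V : Type*} {s : ℕ} (G : SimpleGraph V) (S : V × (Fin s → List V)) : Prop :=
  (∀ i, IsPathLst G (S.2 i) ∧ (S.2 i).head? = some S.1) ∧
  ∀ i j, i ≠ j → ∀ x, x ∈ S.2 i → x ∈ S.2 j → x = S.1

/-- The length (number of edges) of the `i`-th leg of the spider `S`. -/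
def legLen {V : Type*} {s : ℕ} (S : V × (Fin s → List V)) (i : Fin s) : ℕ :=
  (S.2 i).length - 1

/-- The spider obtained from `S` by truncating its `i`-th leg to length `j`. -/
def truncLeg {V : Type*} {s : ℕ} (S : V × (Fin s → List V)) (i : Fin s) (j : ℕ) :
    V × (Fin s → List V) :=
  (S.1, Function.update S.2 i ((S.2 i).take (j + 1)))

/-- `S` is an `L`-admissible spider of total length `n`, where `pgood` is `L`-goodness for
paths and `good m T` is the statement that the spider `T` of total length `m` is `L`-good.
A spider with all legs of length `1` is always admissible; otherwise all legs must be
`L`-good paths and every spider obtained by truncating one leg must be `L`-good. -/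
def spiderAdmWith {V : Type*} {s : ℕ} (G : SimpleGraph V) (pgood : List V → Prop)
    (good : ℕ → V × (Fin s → List V) → Prop) (n : ℕ) (S : V × (Fin s → List V)) : Prop :=
  SpiderShape G S ∧ (∀ i, 1 ≤ legLen S i) ∧ (∑ i, legLen S i) = n ∧
    ((∀ i, legLen S i = 1) ∨
      ((∀ i, pgood (S.2 i)) ∧
        ∀ (i : Fin s) (j : ℕ), 1 ≤ j → j < legLen S i →
          ∀ m : ℕ, m < n → m = n - (legLen S i - j) → good m (truncLeg S i j)))

/-- Fuelled version of `L`-goodness for spiders: a spider of total length `n` is `L`-good if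
it is `L`-admissible and the number of `L`-admissible spiders with the same length vector and
the same leaf vector is at most `f(n, L)`. -/
def spiderGoodAux {V : Type*} {s : ℕ} (G : SimpleGraph V) (L : ℝ) :
    ℕ → ℕ → V × (Fin s → List V) → Prop
  | 0, _, _ => True
  | fuel + 1, n, S =>
      spiderAdmWith G (PathGood G L) (fun m T => spiderGoodAux G L fuel m T) n S ∧
      (({T : V × (Fin s → List V) |
          spiderAdmWith G (PathGood G L) (fun m T' => spiderGoodAux G L fuel m T') n T ∧
          (∀ i, (T.2 i).length = (S.2 i).length) ∧
          ∀ i, (T.2 i).getLast? = (S.2 i).getLast?}).ncard : ℝ) ≤ fJ L n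

/-- The spider `S` is `L`-good. -/
def SpiderGood {V : Type*} {s : ℕ} (G : SimpleGraph V) (L : ℝ)
    (S : V × (Fin s → List V)) : Prop :=
  spiderGoodAux G L ((∑ i, legLen S i) + 1) (∑ i, legLen S i) S

/-- The spider `S` is `L`-admissible. -/
def SpiderAdmissible {V : Type*} {s : ℕ} (G : SimpleGraph V) (L : ℝ)
    (S : V × (Fin s → List V)) : Prop :=
  spiderAdmWith G (PathGood G L) (fun m T => spiderGoodAux G L (m + 1) m T)
    (∑ i, legLen S i) S

/-- `R` is a subspider of `T`: they have the same centre and each leg of `R` is an initial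
subpath of the corresponding leg of `T`. -/
def IsSubspider {V : Type*} {s : ℕ} (R T : V × (Fin s → List V)) : Prop :=
  R.1 = T.1 ∧ ∀ i, R.2 i <+: T.2 i

/-- The generalised subspider of `S` obtained by shortening the `i`-th leg by `γ i` edges. -/
def truncBy {V : Type*} {s : ℕ} (S : V × (Fin s → List V)) (γ : Fin s → ℕ) :
    V × (Fin s → List V) :=
  (S.1, fun i => (S.2 i).take ((S.2 i).length - γ i))


/-- The number of edges of `F` incident to at least one vertex of `S`. -/
def edgesTouching {W : Type*} (F : SimpleGraph W) (S : Set W) : ℕ :=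
  {e ∈ F.edgeSet | ∃ x ∈ S, x ∈ e}.ncard

/-- The density `ρ_F(S) = e_S / |S|`. -/
def rho {W : Type*} (F : SimpleGraph W) (S : Set W) : ℝ :=
  (edgesTouching F S : ℝ) / (S.ncard : ℝ)

/-- `ρ(F) = ρ_F(V(F) ∖ R)` for a graph `F` rooted at `R`. -/
def rhoTop {W : Type*} (F : SimpleGraph W) (R : Set W) : ℝ := rho F Rᶜ

/-- The rooted graph `F` (with root set `R`) is balanced if `ρ_F(S) ≥ ρ(F)` for every
nonempty `S ⊆ V(F) ∖ R`. -/
def IsBalanced {W : Type*} (F : SimpleGraph W) (R : Set W) : Prop :=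
  ∀ S : Set W, S ⊆ Rᶜ → S.Nonempty → rhoTop F R ≤ rho F S

open Classical in
/-- The image of the vertex `w` of `F` in the `a`-th copy of `F` inside the rooted
`t`-blowup of `F` (rooted at `R`). -/
def blowupMap {W : Type*} (R : Set W) (t : ℕ) (a : Fin t) (w : W) :
    ↥R ⊕ Fin t × ↥(Rᶜ) :=
  if h : w ∈ R then Sum.inl ⟨w, h⟩ else Sum.inr (a, ⟨w, h⟩)

/-- The rooted `t`-blowup `t ∗ F` of the graph `F` rooted at `R`: take `t` disjoint copies
of `F` and identify the `t` copies of each root. -/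
def Blowup {W : Type*} (F : SimpleGraph W) (R : Set W) (t : ℕ) :
    SimpleGraph (↥R ⊕ Fin t × ↥(Rᶜ)) :=
  SimpleGraph.fromRel fun x y => ∃ (a : Fin t) (w w' : W),
    F.Adj w w' ∧ x = blowupMap R t a w ∧ y = blowupMap R t a w'

/-- The vertex type of the abstract `s`-legged spider with length vector `kk`:
a centre plus, for each leg `i`, the vertices `(i, 0), …, (i, kk i - 1)` of that leg. -/
abbrev SpiderVtx (s : ℕ) (kk : Fin s → ℕ) : Type := Unit ⊕ (Σ i : Fin s, Fin (kk i))

/-- The `a`-th vertex (with `0 ≤ a ≤ kk i`) on the `i`-th leg of the abstract spider;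
`a = 0` is the centre. -/
def spiderVtx {s : ℕ} (kk : Fin s → ℕ) (i : Fin s) (a : ℕ) : SpiderVtx s kk :=
  if h : 1 ≤ a ∧ a ≤ kk i then Sum.inr ⟨i, ⟨a - 1, by omega⟩⟩ else Sum.inl ()

/-- The abstract `s`-legged spider with length vector `kk`, as a graph: `s` paths of lengths
`kk 0, …, kk (s-1)` starting at a common centre and otherwise disjoint. -/
def SpiderGraph (s : ℕ) (kk : Fin s → ℕ) : SimpleGraph (SpiderVtx s kk) :=
  SimpleGraph.fromRel fun x y => ∃ (i : Fin s) (a : ℕ),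
    a < kk i ∧ x = spiderVtx kk i a ∧ y = spiderVtx kk i (a + 1)

/-- The set of leaves of the abstract spider (the root set). -/
def spiderRoots (s : ℕ) (kk : Fin s → ℕ) : Set (SpiderVtx s kk) :=
  Set.range fun i => spiderVtx kk i (kk i)


universe v

section FJLemmas

lemma fAux_zero (L : ℝ) (fuel : ℕ) : fAux L fuel 0 = L := by cases fuel <;> rfl

lemma fAux_one (L : ℝ) (fuel : ℕ) : fAux L fuel 1 = L := by cases fuel <;> rfl

lemma fAux_stable (L : ℝ) : ∀ m fuel, m ≤ fuel → fAux L fuel m = fJ L m := by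
  intro m
  induction m using Nat.strong_induction_on with
  | _ m ih =>
    match m with
    | 0 => intro fuel _; rw [fAux_zero]; rw [fJ, fAux_zero]
    | 1 => intro fuel _; rw [fAux_one]; rw [fJ, fAux_one]
    | n + 2 =>
      intro fuel hf
      obtain ⟨g, rfl⟩ : ∃ g, fuel = g + 1 := ⟨fuel - 1, by omega⟩
      show fAux L (g + 1) (n + 2) = fJ L (n + 2)
      rw [fJ]
      show fAux L (g + 1) (n + 2) = fAux L (n + 1 + 1) (n + 2)
      simp only [fAux]
      have h1 : fAux L g (n + 1) = fAux L (n + 1) (n + 1) := by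
        rw [ih (n + 1) (by omega) g (by omega)]; rfl
      rw [h1]
      congr 2
      apply iSup_congr
      intro i
      have h2 : fAux L g (i.1 + 1) = fAux L (n + 1) (i.1 + 1) := by
        rw [ih (i.1 + 1) (by omega) g (by omega), ih (i.1 + 1) (by omega) (n + 1) (by omega)]
      have h3 : fAux L g (n + 1 - i.1) = fAux L (n + 1) (n + 1 - i.1) := by
        rw [ih (n + 1 - i.1) (by omega) g (by omega),
          ih (n + 1 - i.1) (by omega) (n + 1) (by omega)]
      rw [h2, h3]

lemma fJ_zero (L : ℝ) : fJ L 0 = L := by rw [fJ, fAux_zero]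

lemma fJ_one (L : ℝ) : fJ L 1 = L := by rw [fJ, fAux_one]

lemma fJ_eq (L : ℝ) (ℓ : ℕ) (h : 2 ≤ ℓ) :
    fJ L ℓ = 1 + fJ L (ℓ - 1) ^ 16 * ((ℓ : ℝ) - 1) ^ 2 *
      ⨆ i : Fin (ℓ - 1), fJ L (i.1 + 1) * fJ L (ℓ - 1 - i.1) := by
  obtain ⟨n, rfl⟩ : ∃ n, ℓ = n + 2 := ⟨ℓ - 2, by omega⟩
  have hd : (n + 2 : ℕ) - 1 = n + 1 := by omega
  rw [fJ, hd]
  show fAux L (n + 1 + 1) (n + 2) = _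
  simp only [fAux]
  have hc : ((n : ℝ) + 2) - 1 = (n : ℝ) + 1 := by ring
  push_cast
  rw [hc]
  have e1 : fAux L (n + 1) (n + 1) = fJ L (n + 1) := fAux_stable L (n + 1) (n + 1) le_rfl
  have e2 : (⨆ i : Fin (n + 1), fAux L (n + 1) (i.1 + 1) * fAux L (n + 1) (n + 1 - i.1))
      = ⨆ i : Fin (n + 1), fJ L (i.1 + 1) * fJ L (n + 1 - i.1) :=
    iSup_congr fun i => by
      rw [fAux_stable L (i.1 + 1) (n + 1) (by omega),
        fAux_stable L (n + 1 - i.1) (n + 1) (by omega)]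
  rw [e1, e2]

lemma one_le_fJ {L : ℝ} (hL : 1 ≤ L) : ∀ n, 1 ≤ fJ L n := by
  intro n
  induction n using Nat.strong_induction_on with
  | _ n ih =>
    match n with
    | 0 => rw [fJ_zero]; exact hL
    | 1 => rw [fJ_one]; exact hL
    | n + 2 =>
      rw [fJ_eq L (n + 2) (by omega)]
      have hd : (n + 2 : ℕ) - 1 = n + 1 := by omega
      rw [hd]
      have h1 : (0:ℝ) ≤ fJ L (n + 1) ^ 16 :=
        pow_nonneg (le_trans zero_le_one (ih (n + 1) (by omega))) _
      have h2 : (0:ℝ) ≤ ((n + 2 : ℕ) : ℝ) - 1 := by push_cast; linarith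
      have h3 : (0:ℝ) ≤ ⨆ i : Fin (n + 1), fJ L (i.1 + 1) * fJ L (n + 1 - i.1) :=
        Real.iSup_nonneg fun i => mul_nonneg
          (le_trans zero_le_one (ih (i.1 + 1) (by omega)))
          (le_trans zero_le_one (ih (n + 1 - i.1) (by omega)))
      have h4 : (0:ℝ) ≤ fJ L (n + 1) ^ 16 * (((n + 2 : ℕ) : ℝ) - 1) ^ 2 *
          ⨆ i : Fin (n + 1), fJ L (i.1 + 1) * fJ L (n + 1 - i.1) :=
        mul_nonneg (mul_nonneg h1 (pow_nonneg h2 2)) h3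
      linarith

lemma fJ_nonneg {L : ℝ} (hL : 1 ≤ L) (n : ℕ) : 0 ≤ fJ L n :=
  le_trans zero_le_one (one_le_fJ hL n)

lemma le_fJ_iSup {L : ℝ} (hL : 1 ≤ L) {ℓ a b : ℕ} (h2 : 2 ≤ ℓ) (ha : 1 ≤ a) (hb : 1 ≤ b)
    (hab : a + b = ℓ) :
    fJ L a * fJ L b ≤ ⨆ i : Fin (ℓ - 1), fJ L (i.1 + 1) * fJ L (ℓ - 1 - i.1) := by
  have hbdd : BddAbove (Set.range fun i : Fin (ℓ - 1) => fJ L (i.1 + 1) * fJ L (ℓ - 1 - i.1)) :=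
    (Set.finite_range _).bddAbove
  have hle := le_ciSup hbdd (⟨a - 1, by omega⟩ : Fin (ℓ - 1))
  refine le_trans (le_of_eq ?_) hle
  have h1 : a - 1 + 1 = a := by omega
  have h2' : ℓ - 1 - (a - 1) = b := by omega
  rw [h1, h2']

lemma fJ_iSup_nonneg {L : ℝ} (hL : 1 ≤ L) (ℓ : ℕ) :
    0 ≤ ⨆ i : Fin (ℓ - 1), fJ L (i.1 + 1) * fJ L (ℓ - 1 - i.1) :=
  Real.iSup_nonneg fun i => mul_nonneg (fJ_nonneg hL _) (fJ_nonneg hL _)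

lemma one_le_fJ_iSup {L : ℝ} (hL : 1 ≤ L) {ℓ : ℕ} (h2 : 2 ≤ ℓ) :
    1 ≤ ⨆ i : Fin (ℓ - 1), fJ L (i.1 + 1) * fJ L (ℓ - 1 - i.1) := by
  refine le_trans ?_ (le_fJ_iSup hL h2 le_rfl (by omega) (by omega : 1 + (ℓ - 1) = ℓ))
  have g1 := one_le_fJ hL 1
  have g2 := one_le_fJ hL (ℓ - 1)
  nlinarith

lemma fJ_supermult {L : ℝ} (hL : 1 ≤ L) {a b : ℕ} (ha : 1 ≤ a) (hb : 1 ≤ b) :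
    fJ L a * fJ L b ≤ fJ L (a + b) := by
  have h2 : 2 ≤ a + b := by omega
  rw [fJ_eq L (a + b) h2]
  have hM := le_fJ_iSup hL h2 ha hb rfl
  have hMn := fJ_iSup_nonneg hL (a + b)
  have h16 : (1:ℝ) ≤ fJ L (a + b - 1) ^ 16 := one_le_pow₀ (one_le_fJ hL _)
  have hc : (1:ℝ) ≤ ((a + b : ℕ) : ℝ) - 1 := by
    have : (2:ℝ) ≤ ((a + b : ℕ) : ℝ) := by exact_mod_cast h2
    linarith
  have hC2 : (1:ℝ) ≤ (((a + b : ℕ) : ℝ) - 1) ^ 2 := one_le_pow₀ hc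
  set M := ⨆ i : Fin (a + b - 1), fJ L (i.1 + 1) * fJ L (a + b - 1 - i.1) with hMdef
  have hPC : (1:ℝ) ≤ fJ L (a + b - 1) ^ 16 * (((a + b : ℕ) : ℝ) - 1) ^ 2 := by
    have := mul_le_mul h16 hC2 zero_le_one (by positivity)
    simpa using this
  calc fJ L a * fJ L b ≤ M := hM
    _ ≤ fJ L (a + b - 1) ^ 16 * (((a + b : ℕ) : ℝ) - 1) ^ 2 * M :=
        le_mul_of_one_le_left hMn hPC
    _ ≤ 1 + fJ L (a + b - 1) ^ 16 * (((a + b : ℕ) : ℝ) - 1) ^ 2 * M := by linarith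

lemma fJ_prod_le {L : ℝ} (hL : 1 ≤ L) {ι : Type*} (t : Finset ι) (g : ι → ℕ)
    (hne : t.Nonempty) (hg : ∀ i ∈ t, 1 ≤ g i) :
    ∏ i ∈ t, fJ L (g i) ≤ fJ L (∑ i ∈ t, g i) := by
  induction hne using Finset.Nonempty.cons_induction with
  | singleton i => simp
  | cons i t hi ht ih =>
    rw [Finset.prod_cons, Finset.sum_cons]
    have h1 : ∏ j ∈ t, fJ L (g j) ≤ fJ L (∑ j ∈ t, g j) :=
      ih fun j hj => hg j (Finset.mem_cons_of_mem hj)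
    obtain ⟨j0, hj0⟩ := ht
    have hsum1 : 1 ≤ ∑ j ∈ t, g j :=
      le_trans (hg j0 (Finset.mem_cons_of_mem hj0))
        (Finset.single_le_sum (fun j _ => Nat.zero_le _) hj0)
    calc fJ L (g i) * ∏ j ∈ t, fJ L (g j)
        ≤ fJ L (g i) * fJ L (∑ j ∈ t, g j) :=
          mul_le_mul_of_nonneg_left h1 (fJ_nonneg hL _)
      _ ≤ fJ L (g i + ∑ j ∈ t, g j) :=
          fJ_supermult hL (hg i (Finset.mem_cons_self i t)) hsum1

end FJLemmas


section CountingLemmas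

universe w

variable {V : Type w} [Fintype V] {s : ℕ}

lemma finite_fixedLengths (c : Fin s → ℕ) :
    {T : V × (Fin s → List V) | ∀ i, (T.2 i).length = c i}.Finite := by
  have hsub : {T : V × (Fin s → List V) | ∀ i, (T.2 i).length = c i} ⊆
      (Set.univ : Set V) ×ˢ Set.pi Set.univ (fun i => {l : List V | l.length = c i}) :=
    fun T hT => ⟨trivial, fun i _ => hT i⟩
  exact (Set.finite_univ.prod (Set.Finite.pi fun i => List.finite_length_eq V (c i))).subset hsub

lemma list_head_ne_last {l : List V} (h2 : 2 ≤ l.length) (hnd : l.Nodup) {a b : V}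
    (ha : l.head? = some a) (hb : l.getLast? = some b) : a ≠ b := by
  intro hab
  rw [List.head?_eq_getElem?] at ha
  rw [List.getLast?_eq_getElem?] at hb
  subst hab
  have : l[0]? = l[l.length - 1]? := by rw [ha, hb]
  have h0 : (0 : ℕ) = l.length - 1 := (List.getElem?_inj (by omega) hnd).mp this
  omega

lemma take_append_tail_drop (l : List V) (j : ℕ) :
    l.take (j + 1) ++ (l.drop j).tail = l := by
  rw [List.tail_drop, List.take_append_drop]

open scoped Classical in
lemma count_internal {G : SimpleGraph V} {L : ℝ} (hL : 1 ≤ L)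
    {ℓv : Fin s → ℕ} {v : Fin s → V} {𝒯 : Finset (V × (Fin s → List V))}
    (h𝒯 : ∀ S ∈ 𝒯, (∀ i, (S.2 i).length = ℓv i + 1) ∧
      (∀ i, (S.2 i).getLast? = some (v i)) ∧ SpiderAdmissible G L S)
    (x : V) (i : Fin s) (j : ℕ) (hj1 : 1 ≤ j) (hj2 : j < ℓv i) :
    ((𝒯.filter (fun S : V × (Fin s → List V) => (S.2 i)[j]? = some x)).card : ℝ) ≤
      fJ L ((∑ i', ℓv i') - (ℓv i - j)) * fJ L (ℓv i - j) := by
  classical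
  set ℓ : ℕ := ∑ i', ℓv i' with hℓdef
  have hℓvi : ℓv i ≤ ℓ := Finset.single_le_sum (fun _ _ => Nat.zero_le _) (Finset.mem_univ i)
  set m : ℕ := ℓ - (ℓv i - j) with hmdef
  set m' : ℕ := ℓv i - j with hm'def
  obtain ⟨g, hg⟩ : ∃ g, ℓv i = g + 1 := ⟨ℓv i - 1, by omega⟩
  set 𝒮 := 𝒯.filter (fun S : V × (Fin s → List V) => (S.2 i)[j]? = some x) with h𝒮
  rcases Finset.eq_empty_or_nonempty 𝒮 with he | ⟨S₀, hS₀⟩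
  · rw [he]
    simp only [Finset.card_empty, Nat.cast_zero]
    exact mul_nonneg (fJ_nonneg hL _) (fJ_nonneg hL _)
  have key : ∀ S ∈ 𝒮,
      spiderGoodAux G L (m + 1) m (truncLeg S i j) ∧
      pathGoodAux G L (g + 1) m' ((S.2 i).drop j) ∧
      (∀ i', ((truncLeg S i j).2 i').length = if i' = i then j + 1 else ℓv i' + 1) ∧
      (∀ i', ((truncLeg S i j).2 i').getLast? = if i' = i then some x else some (v i')) ∧
      ((S.2 i).drop j).head? = some x ∧
      ((S.2 i).drop j).getLast? = some (v i) := by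
    intro S hS
    rw [h𝒮, Finset.mem_filter] at hS
    obtain ⟨hST, hSx⟩ := hS
    obtain ⟨hlen, hlast, hadm⟩ := h𝒯 S hST
    have hleg : ∀ i', legLen S i' = ℓv i' := by
      intro i'; rw [legLen, hlen i']; omega
    have hadm' : spiderAdmWith G (PathGood G L)
        (fun m T => spiderGoodAux G L (m + 1) m T) (∑ i', legLen S i') S := hadm
    have hsumeq : ∑ i', legLen S i' = ℓ := by
      rw [hℓdef]; exact Finset.sum_congr rfl fun i' _ => hleg i'
    rw [hsumeq] at hadm'
    obtain ⟨hshape, hge1, hsum, hdisj⟩ := hadm'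
    rcases hdisj with hone | ⟨hlegs, htrunc⟩
    · exfalso; have := hone i; rw [hleg i] at this; omega
    have htr : spiderGoodAux G L (m + 1) m (truncLeg S i j) := by
      apply htrunc i j hj1 (by rw [hleg i]; exact hj2) m (by omega)
      rw [hleg i]
    have hpgleg := hlegs i
    rw [PathGood] at hpgleg
    obtain ⟨-, hpga⟩ := hpgleg
    rw [hlen i] at hpga
    have hadd : ℓv i + 1 - 1 = ℓv i := by omega
    rw [hadd] at hpga
    simp only [pathGoodAux] at hpga
    have hpg : pathGoodAux G L (ℓv i) m' ((S.2 i).drop j) := by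
      apply hpga.1.2.2 m' (by omega) (by omega)
      · exact (List.drop_suffix j (S.2 i)).isInfix
      · rw [List.length_drop, hlen i]; omega
    rw [hg] at hpg
    refine ⟨htr, hpg, ?_, ?_, ?_, ?_⟩
    · intro i'
      by_cases hii : i' = i
      · subst hii
        rw [if_pos rfl]
        simp only [truncLeg, Function.update_self]
        rw [List.length_take, hlen i']
        omega
      · simp only [truncLeg, Function.update_of_ne hii, if_neg hii]
        exact hlen i'
    · intro i'
      by_cases hii : i' = i
      · subst hii
        rw [if_pos rfl]
        simp only [truncLeg, Function.update_self]
        rw [List.getLast?_eq_getElem?, List.length_take, hlen i']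
        have hmin : min (j + 1) (ℓv i' + 1) = j + 1 := by omega
        rw [hmin]
        have : j + 1 - 1 = j := by omega
        rw [this, List.getElem?_take_of_lt (by omega)]
        exact hSx
      · simp only [truncLeg, Function.update_of_ne hii, if_neg hii]
        exact hlast i'
    · rw [List.head?_drop]; exact hSx
    · rw [List.getLast?_eq_getElem?, List.getElem?_drop, List.length_drop, hlen i]
      have h1 : j + (ℓv i + 1 - j - 1) = ℓv i := by omega
      rw [h1]
      have h2 := hlast i
      rw [List.getLast?_eq_getElem?, hlen i] at h2
      have h3 : ℓv i + 1 - 1 = ℓv i := by omega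
      rwa [h3] at h2
  obtain ⟨htr₀, hpg₀, hlen₀, hlast₀, hhead₀, hgl₀⟩ := key S₀ hS₀
  simp only [spiderGoodAux] at htr₀
  simp only [pathGoodAux] at hpg₀
  set 𝒜 : Set (V × (Fin s → List V)) := {T | spiderAdmWith G (PathGood G L)
      (fun m'' T' => spiderGoodAux G L m m'' T') m T ∧
      (∀ i', (T.2 i').length = ((truncLeg S₀ i j).2 i').length) ∧
      ∀ i', (T.2 i').getLast? = ((truncLeg S₀ i j).2 i').getLast?} with h𝒜
  set ℬ : Set (List V) := {q | pathAdmWith G (fun m'' r => pathGoodAux G L g m'' r) m' q ∧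
      q.head? = ((S₀.2 i).drop j).head? ∧
      q.getLast? = ((S₀.2 i).drop j).getLast?} with hℬ
  have hcard𝒜 : ((𝒜.ncard : ℝ)) ≤ fJ L m := htr₀.2
  have hcardℬ : ((ℬ.ncard : ℝ)) ≤ fJ L m' := hpg₀.2
  have hAfin : 𝒜.Finite := by
    refine (finite_fixedLengths fun i' => ((truncLeg S₀ i j).2 i').length).subset ?_
    intro T hT
    exact hT.2.1
  have hBfin : ℬ.Finite := by
    refine (List.finite_length_eq V (m' + 1)).subset ?_
    intro q hq
    exact hq.1.2.1
  have hmap : ∀ S ∈ 𝒮, (truncLeg S i j, (S.2 i).drop j) ∈ hAfin.toFinset ×ˢ hBfin.toFinset := by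
    intro S hS
    obtain ⟨htr, hpg, hlenS, hlastS, hheadS, hglS⟩ := key S hS
    simp only [spiderGoodAux] at htr
    simp only [pathGoodAux] at hpg
    rw [Finset.mem_product, Set.Finite.mem_toFinset, Set.Finite.mem_toFinset]
    constructor
    · refine ⟨htr.1, fun i' => ?_, fun i' => ?_⟩
      · rw [hlenS i', hlen₀ i']
      · rw [hlastS i', hlast₀ i']
    · exact ⟨hpg.1, by rw [hheadS, hhead₀], by rw [hglS, hgl₀]⟩
  have hinj : Set.InjOn (fun S : V × (Fin s → List V) => (truncLeg S i j, (S.2 i).drop j))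
      (𝒮 : Set (V × (Fin s → List V))) := by
    intro S1 _ S2 _ heq
    have e1 : truncLeg S1 i j = truncLeg S2 i j := congrArg (fun p => p.1) heq
    have e2 : (S1.2 i).drop j = (S2.2 i).drop j := congrArg (fun p => p.2) heq
    have ec : S1.1 = S2.1 := congrArg (fun p => p.1) e1
    have elegs : S1.2 = S2.2 := by
      funext i'
      by_cases hii : i' = i
      · subst hii
        have h1 : (S1.2 i').take (j + 1) = (S2.2 i').take (j + 1) := by
          have := congrFun (congrArg (fun p => p.2) e1) i'
          simpa only [truncLeg, Function.update_self] using this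
        rw [← take_append_tail_drop (S1.2 i') j, ← take_append_tail_drop (S2.2 i') j, h1, e2]
      · have := congrFun (congrArg (fun p => p.2) e1) i'
        simpa only [truncLeg, Function.update_of_ne hii] using this
    exact Prod.ext ec elegs
  have hcard : 𝒮.card ≤ 𝒜.ncard * ℬ.ncard := by
    have h1 := Finset.card_le_card_of_injOn _ hmap hinj
    rwa [Finset.card_product, ← Set.ncard_eq_toFinset_card 𝒜 hAfin,
      ← Set.ncard_eq_toFinset_card ℬ hBfin] at h1
  calc (𝒮.card : ℝ) ≤ (𝒜.ncard : ℝ) * (ℬ.ncard : ℝ) := by exact_mod_cast hcard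
    _ ≤ fJ L m * fJ L m' := by
        apply mul_le_mul hcard𝒜 hcardℬ (Nat.cast_nonneg _)
        exact fJ_nonneg hL m

open scoped Classical in
lemma count_centre {V : Type w} [Fintype V] {s : ℕ} {G : SimpleGraph V} {L : ℝ} (hL : 1 ≤ L)
    {ℓv : Fin s → ℕ} {v : Fin s → V} {𝒯 : Finset (V × (Fin s → List V))}
    (h𝒯 : ∀ S ∈ 𝒯, (∀ i, (S.2 i).length = ℓv i + 1) ∧
      (∀ i, (S.2 i).getLast? = some (v i)) ∧ SpiderAdmissible G L S)
    (x : V) :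
    ((𝒯.filter (fun S : V × (Fin s → List V) => S.1 = x)).card : ℝ) ≤ ∏ i, fJ L (ℓv i) := by
  classical
  set 𝒮 := 𝒯.filter (fun S : V × (Fin s → List V) => S.1 = x) with h𝒮
  rcases Finset.eq_empty_or_nonempty 𝒮 with he | ⟨S₀, hS₀⟩
  · rw [he]
    simp only [Finset.card_empty, Nat.cast_zero]
    exact Finset.prod_nonneg fun i _ => fJ_nonneg hL _
  set 𝒞 : Fin s → Set (List V) := fun i =>
    {q | pathAdmWith G (fun m r => pathGoodAux G L (ℓv i) m r) (ℓv i) q ∧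
      q.head? = some x ∧ q.getLast? = some (v i)} with h𝒞
  have extract : ∀ S ∈ 𝒮, (∀ i, (S.2 i).length = ℓv i + 1) ∧
      (∀ i, (S.2 i).getLast? = some (v i)) ∧ S.1 = x ∧
      SpiderShape G S ∧
      ((∀ i, legLen S i = 1) ∨ ∀ i, PathGood G L (S.2 i)) := by
    intro S hS
    rw [h𝒮, Finset.mem_filter] at hS
    obtain ⟨hST, hSx⟩ := hS
    obtain ⟨hlen, hlast, hadm⟩ := h𝒯 S hST
    have hadm' : spiderAdmWith G (PathGood G L)
        (fun m T => spiderGoodAux G L (m + 1) m T) (∑ i', legLen S i') S := hadm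
    obtain ⟨hshape, hge1, hsum, hdisj⟩ := hadm'
    refine ⟨hlen, hlast, hSx, hshape, ?_⟩
    rcases hdisj with hone | ⟨hlegs, -⟩
    · exact Or.inl hone
    · exact Or.inr hlegs
  have hmem : ∀ S ∈ 𝒮, ∀ i, S.2 i ∈ 𝒞 i := by
    intro S hS i
    obtain ⟨hlen, hlast, hSx, hshape, hgood⟩ := extract S hS
    have hhead : (S.2 i).head? = some x := by rw [(hshape.1 i).2, hSx]
    rcases hgood with hone | hlegs
    · have h1 : ℓv i = 1 := by have := hone i; rw [legLen, hlen i] at this; omega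
      refine ⟨⟨(hshape.1 i).1, by rw [hlen i], ?_⟩, hhead, hlast i⟩
      intro mm hm1 hm2
      rw [h1] at hm2; omega
    · have hpg := hlegs i
      rw [PathGood] at hpg
      obtain ⟨-, hpga⟩ := hpg
      rw [hlen i] at hpga
      have hadd : ℓv i + 1 - 1 = ℓv i := by omega
      rw [hadd] at hpga
      simp only [pathGoodAux] at hpga
      exact ⟨hpga.1, hhead, hlast i⟩
  have hCfin : ∀ i, (𝒞 i).Finite := by
    intro i
    refine (List.finite_length_eq V (ℓv i + 1)).subset ?_
    intro q hq
    exact hq.1.2.1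
  have hCcard : ∀ i, ((𝒞 i).ncard : ℝ) ≤ fJ L (ℓv i) := by
    intro i
    obtain ⟨hlen₀, hlast₀, hS₀x, hshape₀, hgood₀⟩ := extract S₀ hS₀
    have hhead₀ : (S₀.2 i).head? = some x := by rw [(hshape₀.1 i).2, hS₀x]
    rcases hgood₀ with hone | hlegs
    · have h1 : ℓv i = 1 := by have := hone i; rw [legLen, hlen₀ i] at this; omega
      have hsub : 𝒞 i ⊆ {[x, v i]} := by
        intro q hq
        obtain ⟨⟨-, hql, -⟩, hqh, hqg⟩ := hq
        rw [h1] at hql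
        obtain ⟨a, b, rfl⟩ := List.length_eq_two.mp hql
        simp only [List.head?_cons] at hqh
        have hb : b = v i := by
          have : ([a, b] : List V).getLast? = some b := rfl
          rw [this] at hqg; exact Option.some_injective _ hqg
        have ha : a = x := Option.some_injective _ hqh
        simp [ha, hb]
      have h2 : (𝒞 i).ncard ≤ 1 := by
        have := Set.ncard_le_ncard hsub (Set.finite_singleton _)
        rwa [Set.ncard_singleton] at this
      calc ((𝒞 i).ncard : ℝ) ≤ 1 := by exact_mod_cast h2
        _ ≤ fJ L (ℓv i) := one_le_fJ hL _
    · have hpg := hlegs i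
      rw [PathGood] at hpg
      obtain ⟨-, hpga⟩ := hpg
      rw [hlen₀ i] at hpga
      have hadd : ℓv i + 1 - 1 = ℓv i := by omega
      rw [hadd] at hpga
      simp only [pathGoodAux] at hpga
      have hcount := hpga.2
      rw [hhead₀, hlast₀ i] at hcount
      exact hcount
  have hmap : ∀ S ∈ 𝒮, S.2 ∈ Fintype.piFinset (fun i => (hCfin i).toFinset) := by
    intro S hS
    rw [Fintype.mem_piFinset]
    intro i
    rw [Set.Finite.mem_toFinset]
    exact hmem S hS i
  have hinj : Set.InjOn (fun S : V × (Fin s → List V) => S.2)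
      (𝒮 : Set (V × (Fin s → List V))) := by
    intro S1 h1 S2 h2 heq
    have e1 : S1.1 = x := (extract S1 (by exact_mod_cast h1)).2.2.1
    have e2 : S2.1 = x := (extract S2 (by exact_mod_cast h2)).2.2.1
    exact Prod.ext (by rw [e1, e2]) heq
  have hcard : 𝒮.card ≤ ∏ i, (𝒞 i).ncard := by
    have h1 := Finset.card_le_card_of_injOn _ hmap hinj
    calc 𝒮.card ≤ ∏ i, (hCfin i).toFinset.card := by rwa [Fintype.card_piFinset] at h1
      _ = ∏ i, (𝒞 i).ncard :=
          Finset.prod_congr rfl fun i _ => (Set.ncard_eq_toFinset_card _ (hCfin i)).symm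
  calc (𝒮.card : ℝ) ≤ (∏ i, ((𝒞 i).ncard : ℝ)) := by exact_mod_cast hcard
    _ ≤ ∏ i, fJ L (ℓv i) :=
        Finset.prod_le_prod (fun i _ => Nat.cast_nonneg _) (fun i _ => hCcard i)


end CountingLemmas


/-- Lemma 3.3: given at least `f(ℓ, L)/2` `L`-admissible spiders with
length vector `ℓv` and leaf vector `v`, among them there are at least `f(ℓ-1, L)^16 / 2`
spiders which are pairwise vertex-disjoint apart from their leaves. -/
theorem disjoint_spiders (s k : ℕ) (hs : 2 ≤ s) (hk : 2 ≤ k) (ℓv : Fin s → ℕ)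
    (hℓ : ∀ i, 1 ≤ ℓv i ∧ ℓv i ≤ k) (L : ℝ) (hL : 1 ≤ L)
    (V : Type v) [Fintype V] (G : SimpleGraph V) (v : Fin s → V)
    (𝒯 : Finset (V × (Fin s → List V)))
    (h𝒯 : ∀ S ∈ 𝒯, (∀ i, (S.2 i).length = ℓv i + 1) ∧
      (∀ i, (S.2 i).getLast? = some (v i)) ∧ SpiderAdmissible G L S)
    (hcard : fJ L (∑ i, ℓv i) / 2 ≤ (𝒯.card : ℝ)) :
    ∃ 𝒟 ⊆ 𝒯, fJ L ((∑ i, ℓv i) - 1) ^ 16 / 2 ≤ (𝒟.card : ℝ) ∧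
      ∀ S ∈ 𝒟, ∀ T ∈ 𝒟, S ≠ T →
        ∀ x : V, (∃ i, x ∈ S.2 i) → (∃ i, x ∈ T.2 i) → ∃ i, x = v i := by
  classical
  set ℓ : ℕ := ∑ i, ℓv i with hℓdef
  have hℓvle : ∀ i, ℓv i ≤ ℓ := fun i =>
    Finset.single_le_sum (fun _ _ => Nat.zero_le _) (Finset.mem_univ i)
  have hsℓ : s ≤ ℓ := by
    calc s = ∑ _i : Fin s, 1 := by simp
      _ ≤ ∑ i, ℓv i := Finset.sum_le_sum fun i _ => (hℓ i).1
  have hℓ2 : 2 ≤ ℓ := le_trans hs hsℓ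
  have hℓs : ∑ i, (ℓv i - 1) = ℓ - s := by
    have h1 : ∑ i, ℓv i = ∑ i, ((ℓv i - 1) + 1) :=
      Finset.sum_congr rfl fun i _ => by have := (hℓ i).1; omega
    rw [Finset.sum_add_distrib] at h1
    simp only [Finset.sum_const, Finset.card_univ, Fintype.card_fin, smul_eq_mul, mul_one] at h1
    omega
  -- basic facts about members of 𝒯
  have hfacts : ∀ S ∈ 𝒯, (∀ i, (S.2 i).length = ℓv i + 1) ∧
      (∀ i, (S.2 i).getLast? = some (v i)) ∧ SpiderShape G S := by
    intro S hS
    obtain ⟨hlen, hlast, hadm⟩ := h𝒯 S hS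
    have hadm' : spiderAdmWith G (PathGood G L)
        (fun m T => spiderGoodAux G L (m + 1) m T) (∑ i', legLen S i') S := hadm
    exact ⟨hlen, hlast, hadm'.1⟩
  have centre_ne : ∀ S ∈ 𝒯, ∀ i, S.1 ≠ v i := by
    intro S hS i
    obtain ⟨hlen, hlast, hshape⟩ := hfacts S hS
    exact list_head_ne_last (l := S.2 i) (by rw [hlen i]; have := (hℓ i).1; omega)
      (hshape.1 i).1.2 (hshape.1 i).2 (hlast i)
  have centre_mem : ∀ S : V × (Fin s → List V), ∀ i, (S.2 i).head? = some S.1 → S.1 ∈ S.2 i := by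
    intro S i h
    exact List.mem_of_mem_head? (by rw [h]; rfl)
  -- the non-leaf vertices of a spider
  set nonLeaf : (V × (Fin s → List V)) → Finset V := fun T =>
    insert T.1 (Finset.univ.biUnion fun i => (((T.2 i).drop 1).dropLast).toFinset)
    with hnonLeaf
  have nonLeaf_card : ∀ T ∈ 𝒯, (nonLeaf T).card ≤ ℓ - 1 := by
    intro T hT
    obtain ⟨hlen, -, -⟩ := hfacts T hT
    calc (nonLeaf T).card
        ≤ (Finset.univ.biUnion fun i => (((T.2 i).drop 1).dropLast).toFinset).card + 1 :=
          Finset.card_insert_le _ _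
      _ ≤ (∑ i, (((T.2 i).drop 1).dropLast).toFinset.card) + 1 := by
          exact Nat.add_le_add_right (Finset.card_biUnion_le) 1
      _ ≤ (∑ i, (ℓv i - 1)) + 1 := by
          apply Nat.add_le_add_right
          apply Finset.sum_le_sum
          intro i _
          calc (((T.2 i).drop 1).dropLast).toFinset.card
              ≤ (((T.2 i).drop 1).dropLast).length := List.toFinset_card_le _
            _ = ℓv i - 1 := by
                rw [List.length_dropLast, List.length_drop, hlen i]
                omega
      _ ≤ ℓ - 1 := by omega
  -- members of nonLeaf T are vertices of T which are not leaves
  have nonLeaf_prop : ∀ T ∈ 𝒯, ∀ y ∈ nonLeaf T, (∃ i, y ∈ T.2 i) ∧ ∀ i, y ≠ v i := by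
    intro T hT y hy
    obtain ⟨hlen, hlast, hshape⟩ := hfacts T hT
    rw [hnonLeaf] at hy
    simp only [Finset.mem_insert, Finset.mem_biUnion, Finset.mem_univ, true_and,
      List.mem_toFinset] at hy
    rcases hy with rfl | ⟨i, hyi⟩
    · refine ⟨⟨⟨0, by omega⟩, centre_mem T _ (hshape.1 _).2⟩, centre_ne T hT⟩
    · have hymem : y ∈ T.2 i :=
        List.drop_subset 1 (T.2 i) (List.dropLast_subset _ hyi)
      refine ⟨⟨i, hymem⟩, ?_⟩
      intro i' hyv
      obtain ⟨p, hp, hpe⟩ := List.getElem_of_mem hyi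
      have hplen : p < ℓv i - 1 := by
        have := hp
        rwa [List.length_dropLast, List.length_drop, hlen i] at this
      have hye : (T.2 i)[1 + p]? = some y := by
        rw [← hpe, List.getElem_dropLast, List.getElem_drop]
        exact (List.getElem?_eq_getElem _).symm ▸ rfl
      by_cases hii : i' = i
      · subst hii
        have hgl : (T.2 i')[ℓv i']? = some (v i') := by
          have h2 := hlast i'
          rw [List.getLast?_eq_getElem?, hlen i'] at h2
          have h3 : ℓv i' + 1 - 1 = ℓv i' := by omega
          rwa [h3] at h2
        have : 1 + p = ℓv i' := by
          apply (List.getElem?_inj (by rw [hlen i']; omega) (hshape.1 i').1.2).mp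
          rw [hye, hgl, hyv]
        omega
      · have hvmem : v i' ∈ T.2 i' := by
          have h2 := hlast i'
          exact List.mem_of_mem_getLast? (by rw [h2]; rfl)
        have : v i' = T.1 := hshape.2 i i' (fun h => hii h.symm) (v i') (hyv ▸ hymem) hvmem
        exact centre_ne T hT i' this.symm
  -- membership criterion for nonLeaf
  have mem_nonLeaf : ∀ T ∈ 𝒯, ∀ y, (∃ i, y ∈ T.2 i) → (∀ i, y ≠ v i) → y ∈ nonLeaf T := by
    intro T hT y hyi hyv
    obtain ⟨hlen, hlast, hshape⟩ := hfacts T hT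
    obtain ⟨i, hyi⟩ := hyi
    obtain ⟨p, hp, hpe⟩ := List.getElem_of_mem hyi
    rw [hlen i] at hp
    rw [hnonLeaf]
    simp only [Finset.mem_insert, Finset.mem_biUnion, Finset.mem_univ, true_and,
      List.mem_toFinset]
    rcases Nat.eq_zero_or_pos p with rfl | hppos
    · left
      have hh := (hshape.1 i).2
      rw [List.head?_eq_getElem?, List.getElem?_eq_getElem (by omega)] at hh
      have : T.1 = (T.2 i)[0] := Option.some_injective _ hh.symm
      rw [this, hpe]
    · have hpne : p ≠ ℓv i := by
        intro hpeq
        apply hyv i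
        have hgl : (T.2 i)[ℓv i]? = some (v i) := by
          have h2 := hlast i
          rw [List.getLast?_eq_getElem?, hlen i] at h2
          have h3 : ℓv i + 1 - 1 = ℓv i := by omega
          rwa [h3] at h2
        rw [← hpeq, List.getElem?_eq_getElem (by omega), hpe] at hgl
        exact Option.some_injective _ hgl
      right
      refine ⟨i, ?_⟩
      rw [List.mem_iff_getElem]
      refine ⟨p - 1, ?_, ?_⟩
      · rw [List.length_dropLast, List.length_drop, hlen i]; omega
      · rw [List.getElem_dropLast, List.getElem_drop]
        have h1 : 1 + (p - 1) = p := by omega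
        simp only [h1]
        exact hpe
  -- set up the maximal disjoint family
  set Pdis : Finset (V × (Fin s → List V)) → Prop := fun 𝒟 =>
    ∀ S ∈ 𝒟, ∀ T ∈ 𝒟, S ≠ T → ∀ x : V, (∃ i, x ∈ S.2 i) → (∃ i, x ∈ T.2 i) → ∃ i, x = v i
    with hPdis
  set Cand : Finset (Finset (V × (Fin s → List V))) := 𝒯.powerset.filter Pdis with hCand
  have hCne : Cand.Nonempty := by
    refine ⟨∅, ?_⟩
    rw [hCand, Finset.mem_filter]
    exact ⟨Finset.mem_powerset.mpr (Finset.empty_subset _), by intro S hS; simp at hS⟩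
  obtain ⟨𝒟, h𝒟C, hmax⟩ := Finset.exists_max_image Cand Finset.card hCne
  have h𝒟T : 𝒟 ⊆ 𝒯 := by
    rw [hCand, Finset.mem_filter] at h𝒟C
    exact Finset.mem_powerset.mp h𝒟C.1
  have h𝒟P : Pdis 𝒟 := by
    rw [hCand, Finset.mem_filter] at h𝒟C
    exact h𝒟C.2
  by_cases hbig : fJ L (ℓ - 1) ^ 16 / 2 ≤ (𝒟.card : ℝ)
  · exact ⟨𝒟, h𝒟T, hbig, h𝒟P⟩
  push_neg at hbig
  exfalso
  -- the covering set B
  set B : Finset V := 𝒟.biUnion nonLeaf with hB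
  have hBcard : B.card ≤ 𝒟.card * (ℓ - 1) := by
    calc B.card ≤ ∑ T ∈ 𝒟, (nonLeaf T).card := Finset.card_biUnion_le
      _ ≤ ∑ _T ∈ 𝒟, (ℓ - 1) := Finset.sum_le_sum fun T hT => nonLeaf_card T (h𝒟T hT)
      _ = 𝒟.card * (ℓ - 1) := by rw [Finset.sum_const, smul_eq_mul]
  have hBv : ∀ x ∈ B, ∀ i, x ≠ v i := by
    intro x hx
    rw [hB, Finset.mem_biUnion] at hx
    obtain ⟨T, hT, hxT⟩ := hx
    exact (nonLeaf_prop T (h𝒟T hT) x hxT).2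
  -- every spider in 𝒯 contains a vertex of B
  have cover : ∀ S ∈ 𝒯, ∃ x ∈ B, ∃ i, x ∈ S.2 i := by
    intro S hS
    by_cases hSD : S ∈ 𝒟
    · refine ⟨S.1, ?_, ⟨0, by omega⟩, centre_mem S _ (((hfacts S hS).2.2).1 _).2⟩
      rw [hB, Finset.mem_biUnion]
      exact ⟨S, hSD, Finset.mem_insert_self _ _⟩
    · have hnotC : insert S 𝒟 ∉ Cand := by
        intro hC
        have := hmax _ hC
        rw [Finset.card_insert_of_notMem hSD] at this
        omega
      have hsubT : insert S 𝒟 ⊆ 𝒯 := Finset.insert_subset hS h𝒟T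
      have hnP : ¬ Pdis (insert S 𝒟) := by
        intro hP
        exact hnotC (by rw [hCand, Finset.mem_filter]; exact ⟨Finset.mem_powerset.mpr hsubT, hP⟩)
      have hnP' : ¬ ∀ S' ∈ insert S 𝒟, ∀ T' ∈ insert S 𝒟, S' ≠ T' →
          ∀ x : V, (∃ i, x ∈ S'.2 i) → (∃ i, x ∈ T'.2 i) → ∃ i, x = v i := hnP
      push_neg at hnP'
      obtain ⟨S', hS', T', hT', hne, x, hxS', hxT', hxv⟩ := hnP'
      rw [Finset.mem_insert] at hS' hT'
      have key : ∃ T ∈ 𝒟, (∃ i, x ∈ T.2 i) ∧ (∃ i, x ∈ S.2 i) := by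
        rcases hS' with rfl | hS'D
        · rcases hT' with rfl | hT'D
          · exact absurd rfl hne
          · exact ⟨T', hT'D, hxT', hxS'⟩
        · rcases hT' with rfl | hT'D
          · exact ⟨S', hS'D, hxS', hxT'⟩
          · exact absurd (h𝒟P S' hS'D T' hT'D hne x hxS' hxT') (not_exists.mpr hxv)
      obtain ⟨T, hTD, hxT, hxS⟩ := key
      refine ⟨x, ?_, hxS⟩
      rw [hB, Finset.mem_biUnion]
      exact ⟨T, hTD, mem_nonLeaf T (h𝒟T hTD) x hxT hxv⟩
  -- counting
  set Mval : ℝ := ⨆ i : Fin (ℓ - 1), fJ L (i.1 + 1) * fJ L (ℓ - 1 - i.1) with hMval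
  have hM1 : 1 ≤ Mval := one_le_fJ_iSup hL hℓ2
  have hM0 : 0 ≤ Mval := le_trans zero_le_one hM1
  have perx : ∀ x ∈ B, ((𝒯.filter fun S : V × (Fin s → List V) => ∃ i, x ∈ S.2 i).card : ℝ) ≤
      ((ℓ : ℝ) - 1) * Mval := by
    intro x hxB
    have hxv := hBv x hxB
    have hsub : 𝒯.filter (fun S : V × (Fin s → List V) => ∃ i, x ∈ S.2 i) ⊆
        (𝒯.filter fun S : V × (Fin s → List V) => S.1 = x) ∪
          Finset.univ.biUnion (fun i => (Finset.Ico 1 (ℓv i)).biUnion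
            (fun j => 𝒯.filter fun S : V × (Fin s → List V) => (S.2 i)[j]? = some x)) := by
      intro S hSf
      rw [Finset.mem_filter] at hSf
      obtain ⟨hST, i, hxi⟩ := hSf
      obtain ⟨hlen, hlast, hshape⟩ := hfacts S hST
      obtain ⟨p, hp, hpe⟩ := List.getElem_of_mem hxi
      rw [hlen i] at hp
      rw [Finset.mem_union]
      rcases Nat.eq_zero_or_pos p with rfl | hppos
      · left
        rw [Finset.mem_filter]
        refine ⟨hST, ?_⟩
        have hh := (hshape.1 i).2
        rw [List.head?_eq_getElem?, List.getElem?_eq_getElem (by omega)] at hh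
        have : S.1 = (S.2 i)[0] := Option.some_injective _ hh.symm
        rw [this, hpe]
      · have hpne : p ≠ ℓv i := by
          intro hpeq
          apply hxv i
          have hgl : (S.2 i)[ℓv i]? = some (v i) := by
            have h2 := hlast i
            rw [List.getLast?_eq_getElem?, hlen i] at h2
            have h3 : ℓv i + 1 - 1 = ℓv i := by omega
            rwa [h3] at h2
          rw [← hpeq, List.getElem?_eq_getElem (by omega), hpe] at hgl
          exact Option.some_injective _ hgl
        right
        rw [Finset.mem_biUnion]
        refine ⟨i, Finset.mem_univ i, ?_⟩
        rw [Finset.mem_biUnion]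
        refine ⟨p, Finset.mem_Ico.mpr ⟨hppos, by omega⟩, ?_⟩
        rw [Finset.mem_filter]
        exact ⟨hST, by rw [List.getElem?_eq_getElem (by rw [hlen i]; omega), hpe]⟩
    have hcount : (𝒯.filter fun S : V × (Fin s → List V) => ∃ i, x ∈ S.2 i).card ≤
        (𝒯.filter fun S : V × (Fin s → List V) => S.1 = x).card +
          ∑ i, ∑ j ∈ Finset.Ico 1 (ℓv i),
            (𝒯.filter fun S : V × (Fin s → List V) => (S.2 i)[j]? = some x).card := by
      calc (𝒯.filter fun S : V × (Fin s → List V) => ∃ i, x ∈ S.2 i).card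
          ≤ _ := Finset.card_le_card hsub
        _ ≤ _ := Finset.card_union_le _ _
        _ ≤ (𝒯.filter fun S : V × (Fin s → List V) => S.1 = x).card +
            ∑ i, ((Finset.Ico 1 (ℓv i)).biUnion
              (fun j => 𝒯.filter fun S : V × (Fin s → List V) => (S.2 i)[j]? = some x)).card := by
            exact Nat.add_le_add_left Finset.card_biUnion_le _
        _ ≤ _ := by
            apply Nat.add_le_add_left
            exact Finset.sum_le_sum fun i _ => Finset.card_biUnion_le
    -- centre bound
    have hcentreM : ((𝒯.filter fun S : V × (Fin s → List V) => S.1 = x).card : ℝ) ≤ Mval := by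
      have h1 := count_centre (G := G) hL h𝒯 x
      refine le_trans h1 ?_
      set i0 : Fin s := ⟨0, by omega⟩ with hi0
      set i1 : Fin s := ⟨1, by omega⟩ with hi1
      have hi01 : i1 ≠ i0 := by rw [hi0, hi1]; intro h; simpa using congrArg Fin.val h
      have hprodsplit : ∏ i, fJ L (ℓv i) =
          fJ L (ℓv i0) * ∏ i ∈ Finset.univ.erase i0, fJ L (ℓv i) :=
        (Finset.mul_prod_erase Finset.univ _ (Finset.mem_univ i0)).symm
      have hsumsplit : ℓv i0 + ∑ i ∈ Finset.univ.erase i0, ℓv i = ℓ :=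
        Finset.add_sum_erase Finset.univ _ (Finset.mem_univ i0)
      have hprodle : ∏ i ∈ Finset.univ.erase i0, fJ L (ℓv i) ≤
          fJ L (∑ i ∈ Finset.univ.erase i0, ℓv i) :=
        fJ_prod_le hL _ _ ⟨i1, Finset.mem_erase.mpr ⟨hi01, Finset.mem_univ i1⟩⟩
          (fun i _ => (hℓ i).1)
      have hsum1 : 1 ≤ ∑ i ∈ Finset.univ.erase i0, ℓv i :=
        le_trans ((hℓ i1).1) (Finset.single_le_sum (fun _ _ => Nat.zero_le _)
          (Finset.mem_erase.mpr ⟨hi01, Finset.mem_univ i1⟩))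
      calc ∏ i, fJ L (ℓv i)
          = fJ L (ℓv i0) * ∏ i ∈ Finset.univ.erase i0, fJ L (ℓv i) := hprodsplit
        _ ≤ fJ L (ℓv i0) * fJ L (∑ i ∈ Finset.univ.erase i0, ℓv i) :=
            mul_le_mul_of_nonneg_left hprodle (fJ_nonneg hL _)
        _ ≤ Mval := le_fJ_iSup hL hℓ2 (hℓ i0).1 hsum1 (by omega)
    -- internal bound
    have hintM : ∀ i, ∀ j ∈ Finset.Ico 1 (ℓv i),
        ((𝒯.filter fun S : V × (Fin s → List V) => (S.2 i)[j]? = some x).card : ℝ) ≤ Mval := by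
      intro i j hj
      rw [Finset.mem_Ico] at hj
      have h1 := count_internal (G := G) hL h𝒯 x i j hj.1 hj.2
      refine le_trans h1 ?_
      have hℓvi := hℓvle i
      exact le_fJ_iSup hL hℓ2 (by omega) (by omega) (by omega)
    have hIco : ∀ i : Fin s, ((Finset.Ico 1 (ℓv i)).card : ℝ) = (ℓv i : ℝ) - 1 := by
      intro i
      rw [Nat.card_Ico]
      have := (hℓ i).1
      push_cast [Nat.cast_sub this]
      ring
    calc ((𝒯.filter fun S : V × (Fin s → List V) => ∃ i, x ∈ S.2 i).card : ℝ)
        ≤ ((𝒯.filter fun S : V × (Fin s → List V) => S.1 = x).card : ℝ) +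
          ∑ i, ∑ j ∈ Finset.Ico 1 (ℓv i),
            ((𝒯.filter fun S : V × (Fin s → List V) => (S.2 i)[j]? = some x).card : ℝ) := by
          exact_mod_cast hcount
      _ ≤ Mval + ∑ i, ∑ _j ∈ Finset.Ico 1 (ℓv i), Mval := by
          apply add_le_add hcentreM
          exact Finset.sum_le_sum fun i _ => Finset.sum_le_sum fun j hj => hintM i j hj
      _ = Mval + ∑ i, ((ℓv i : ℝ) - 1) * Mval := by
          congr 1
          refine Finset.sum_congr rfl fun i _ => ?_
          rw [Finset.sum_const, nsmul_eq_mul, hIco i]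
      _ = (1 + ∑ i, ((ℓv i : ℝ) - 1)) * Mval := by rw [add_mul, one_mul, Finset.sum_mul]
      _ ≤ ((ℓ : ℝ) - 1) * Mval := by
          apply mul_le_mul_of_nonneg_right _ hM0
          have hcast : ∑ i, ((ℓv i : ℝ) - 1) = (ℓ : ℝ) - s := by
            rw [Finset.sum_sub_distrib]
            simp only [Finset.sum_const, Finset.card_univ, Fintype.card_fin, nsmul_eq_mul,
              mul_one]
            rw [hℓdef]
            push_cast
            ring
          rw [hcast]
          have : (2 : ℝ) ≤ (s : ℝ) := by exact_mod_cast hs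
          linarith
  -- final count
  have hTle : (𝒯.card : ℝ) ≤ (𝒟.card : ℝ) * ((ℓ : ℝ) - 1) ^ 2 * Mval := by
    have hsub : 𝒯 ⊆ B.biUnion (fun x => 𝒯.filter fun S : V × (Fin s → List V) => ∃ i, x ∈ S.2 i) := by
      intro S hS
      obtain ⟨x, hxB, hxi⟩ := cover S hS
      rw [Finset.mem_biUnion]
      exact ⟨x, hxB, Finset.mem_filter.mpr ⟨hS, hxi⟩⟩
    have h1 : (𝒯.card : ℝ) ≤ ∑ x ∈ B,
        ((𝒯.filter fun S : V × (Fin s → List V) => ∃ i, x ∈ S.2 i).card : ℝ) := by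
      have := le_trans (Finset.card_le_card hsub) (Finset.card_biUnion_le)
      exact_mod_cast this
    have h2 : ∑ x ∈ B,
        ((𝒯.filter fun S : V × (Fin s → List V) => ∃ i, x ∈ S.2 i).card : ℝ) ≤
        (B.card : ℝ) * (((ℓ : ℝ) - 1) * Mval) := by
      calc _ ≤ ∑ _x ∈ B, ((ℓ : ℝ) - 1) * Mval := Finset.sum_le_sum perx
        _ = (B.card : ℝ) * (((ℓ : ℝ) - 1) * Mval) := by
            rw [Finset.sum_const, nsmul_eq_mul]
    have h3 : (B.card : ℝ) ≤ (𝒟.card : ℝ) * ((ℓ : ℝ) - 1) := by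
      have hc : ((𝒟.card * (ℓ - 1) : ℕ) : ℝ) = (𝒟.card : ℝ) * ((ℓ : ℝ) - 1) := by
        push_cast [Nat.cast_sub (by omega : 1 ≤ ℓ)]
        ring
      calc (B.card : ℝ) ≤ ((𝒟.card * (ℓ - 1) : ℕ) : ℝ) := by exact_mod_cast hBcard
        _ = _ := hc
    have hℓ1 : (0 : ℝ) ≤ (ℓ : ℝ) - 1 := by
      have : (2 : ℝ) ≤ (ℓ : ℝ) := by exact_mod_cast hℓ2
      linarith
    calc (𝒯.card : ℝ) ≤ ∑ x ∈ B,
          ((𝒯.filter fun S : V × (Fin s → List V) => ∃ i, x ∈ S.2 i).card : ℝ) := h1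
      _ ≤ (B.card : ℝ) * (((ℓ : ℝ) - 1) * Mval) := h2
      _ ≤ ((𝒟.card : ℝ) * ((ℓ : ℝ) - 1)) * (((ℓ : ℝ) - 1) * Mval) := by
          apply mul_le_mul_of_nonneg_right h3
          exact mul_nonneg hℓ1 hM0
      _ = (𝒟.card : ℝ) * ((ℓ : ℝ) - 1) ^ 2 * Mval := by ring
  -- contradiction with the recursion for fJ
  have hfJ : fJ L ℓ = 1 + fJ L (ℓ - 1) ^ 16 * ((ℓ : ℝ) - 1) ^ 2 * Mval := fJ_eq L ℓ hℓ2
  have hF1 : (1 : ℝ) ≤ fJ L (ℓ - 1) ^ 16 := one_le_pow₀ (one_le_fJ hL _)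
  have hA1 : (1 : ℝ) ≤ ((ℓ : ℝ) - 1) ^ 2 := by
    have : (2 : ℝ) ≤ (ℓ : ℝ) := by exact_mod_cast hℓ2
    nlinarith
  have hAM : (0 : ℝ) < ((ℓ : ℝ) - 1) ^ 2 * Mval := by nlinarith
  have hstrict : (𝒟.card : ℝ) * ((ℓ : ℝ) - 1) ^ 2 * Mval <
      fJ L (ℓ - 1) ^ 16 / 2 * (((ℓ : ℝ) - 1) ^ 2 * Mval) := by
    calc (𝒟.card : ℝ) * ((ℓ : ℝ) - 1) ^ 2 * Mval
        = (𝒟.card : ℝ) * (((ℓ : ℝ) - 1) ^ 2 * Mval) := by ring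
      _ < fJ L (ℓ - 1) ^ 16 / 2 * (((ℓ : ℝ) - 1) ^ 2 * Mval) :=
          mul_lt_mul_of_pos_right hbig hAM
  have hfinal : fJ L ℓ / 2 ≤ (𝒯.card : ℝ) := hcard
  nlinarith [hTle, hstrict, hfinal, hfJ]

end ExtremalSubdivision
end
end

section
/- Let s ≥ 2 and k ≥ 1 be integers, and let F be the s-legged spider with length vector (k,k,…,k), viewed as a rooted graph whose roots are its s leaves. Then F is balanced and ρ(F) = sk/(s(k−1)+1). -/
open Finset Filter

noncomputable section

namespace ExtremalSubdivision

universe u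

section SpiderAux

open Classical

variable {s k : ℕ}

private lemma sv_zero (i : Fin s) : spiderVtx (fun _ : Fin s => k) i 0 = Sum.inl () := by
  simp [spiderVtx]

private lemma sv_pos (i : Fin s) {a : ℕ} (h1 : 1 ≤ a) (h2 : a ≤ k) (h3 : a - 1 < k) :
    spiderVtx (fun _ : Fin s => k) i a = Sum.inr ⟨i, ⟨a - 1, h3⟩⟩ := by
  rw [spiderVtx, dif_pos (⟨h1, h2⟩ : 1 ≤ a ∧ a ≤ k)]

private lemma sv_inj {i j : Fin s} {a b : ℕ} (ha : a ≤ k) (hb : b ≤ k)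
    (h : spiderVtx (fun _ : Fin s => k) i a = spiderVtx (fun _ : Fin s => k) j b) :
    (a = 0 ∧ b = 0) ∨ (i = j ∧ a = b) := by
  rcases Nat.eq_zero_or_pos a with rfl | hpa
  · rcases Nat.eq_zero_or_pos b with rfl | hpb
    · exact Or.inl ⟨rfl, rfl⟩
    · rw [sv_zero, sv_pos j hpb hb (by omega)] at h
      exact absurd h (by simp)
  · rcases Nat.eq_zero_or_pos b with rfl | hpb
    · rw [sv_pos i hpa ha (by omega), sv_zero] at h
      exact absurd h (by simp)
    · rw [sv_pos i hpa ha (by omega), sv_pos j hpb hb (by omega)] at h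
      injection h with h'
      obtain ⟨rfl, h2⟩ := Sigma.mk.inj_iff.mp h'
      have h3 : a - 1 = b - 1 := congrArg Fin.val (eq_of_heq h2)
      exact Or.inr ⟨rfl, by omega⟩

/-- The edge of the spider indexed by leg `i` and position `a`. -/
private def emap (s k : ℕ) (p : Fin s × Fin k) : Sym2 (SpiderVtx s fun _ : Fin s => k) :=
  s(spiderVtx (fun _ : Fin s => k) p.1 p.2.1, spiderVtx (fun _ : Fin s => k) p.1 (p.2.1 + 1))

private lemma adj_emap (i : Fin s) (a : Fin k) :
    (SpiderGraph s fun _ => k).Adj (spiderVtx (fun _ : Fin s => k) i a.1)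
      (spiderVtx (fun _ : Fin s => k) i (a.1 + 1)) := by
  rw [SpiderGraph, SimpleGraph.fromRel_adj]
  refine ⟨?_, Or.inl ⟨i, a.1, a.2, rfl, rfl⟩⟩
  intro h
  rcases sv_inj (le_of_lt a.2) (by omega) h with ⟨_, h0⟩ | ⟨_, h1⟩ <;> omega

private lemma edgeSet_spider (s k : ℕ) :
    (SpiderGraph s fun _ => k).edgeSet = Set.range (emap s k) := by
  ext e
  induction e using Sym2.ind with
  | _ x y =>
    rw [SimpleGraph.mem_edgeSet]
    constructor
    · intro h
      rw [SpiderGraph, SimpleGraph.fromRel_adj] at h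
      obtain ⟨hne, h | h⟩ := h
      · obtain ⟨i, a, hak, rfl, rfl⟩ := h
        exact ⟨(i, ⟨a, hak⟩), rfl⟩
      · obtain ⟨i, a, hak, rfl, rfl⟩ := h
        exact ⟨(i, ⟨a, hak⟩), Sym2.eq_swap⟩
    · rintro ⟨⟨i, a⟩, h⟩
      rw [emap, Sym2.eq_iff] at h
      rcases h with ⟨rfl, rfl⟩ | ⟨rfl, rfl⟩
      · exact adj_emap i a
      · exact (adj_emap i a).symm

private lemma emap_inj : Function.Injective (emap s k) := by
  rintro ⟨i, a⟩ ⟨j, b⟩ h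
  rw [emap, emap, Sym2.eq_iff] at h
  rcases h with ⟨h1, h2⟩ | ⟨h1, h2⟩
  · rcases sv_inj a.2 b.2 h2 with ⟨h0, _⟩ | ⟨rfl, hab⟩
    · omega
    · have : a = b := Fin.ext (by omega)
      subst this; rfl
  · rcases sv_inj (le_of_lt a.2) b.2 h1 with ⟨_, h0⟩ | ⟨rfl, hab⟩
    · omega
    · rcases sv_inj a.2 (le_of_lt b.2) h2 with ⟨h0, _⟩ | ⟨_, hab'⟩ <;> omega

private lemma edgesTouching_spider (S : Set (SpiderVtx s fun _ : Fin s => k)) :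
    edgesTouching (SpiderGraph s fun _ => k) S =
      {p : Fin s × Fin k | spiderVtx (fun _ : Fin s => k) p.1 p.2.1 ∈ S ∨
        spiderVtx (fun _ : Fin s => k) p.1 (p.2.1 + 1) ∈ S}.ncard := by
  rw [edgesTouching]
  have himg : {e ∈ (SpiderGraph s fun _ => k).edgeSet | ∃ x ∈ S, x ∈ e} =
      emap s k '' {p : Fin s × Fin k | spiderVtx (fun _ : Fin s => k) p.1 p.2.1 ∈ S ∨
        spiderVtx (fun _ : Fin s => k) p.1 (p.2.1 + 1) ∈ S} := by
    ext e
    simp only [Set.mem_setOf_eq, edgeSet_spider, Set.mem_range, Set.mem_image]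
    constructor
    · rintro ⟨⟨p, rfl⟩, x, hxS, hxe⟩
      refine ⟨p, ?_, rfl⟩
      rw [emap, Sym2.mem_iff] at hxe
      rcases hxe with rfl | rfl
      · exact Or.inl hxS
      · exact Or.inr hxS
    · rintro ⟨p, hp, rfl⟩
      refine ⟨⟨p, rfl⟩, ?_⟩
      rcases hp with h | h
      · exact ⟨_, h, Sym2.mem_mk_left _ _⟩
      · exact ⟨_, h, Sym2.mem_mk_right _ _⟩
  rw [himg, Set.ncard_image_of_injective _ emap_inj]

private lemma ncard_prod_set (q : Set (Fin s × Fin k)) :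
    q.ncard = ∑ i : Fin s, (Finset.univ.filter fun a : Fin k => (i, a) ∈ q).card := by
  rw [Set.ncard_eq_toFinset_card']
  have h : q.toFinset = Finset.univ.filter (· ∈ q) := by ext x; simp
  rw [h, Finset.card_filter, Fintype.sum_prod_type]
  simp only [Finset.card_filter]

private lemma ncard_vertex_set (T : Set (SpiderVtx s fun _ : Fin s => k)) :
    T.ncard = (if Sum.inl () ∈ T then 1 else 0) +
      ∑ i : Fin s, (Finset.univ.filter fun b : Fin k => Sum.inr ⟨i, b⟩ ∈ T).card := by
  rw [Set.ncard_eq_toFinset_card']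
  have h : T.toFinset = Finset.univ.filter (· ∈ T) := by ext x; simp
  rw [h, Finset.card_filter, Fintype.sum_sum_type, ← Finset.univ_sigma_univ,
    Finset.sum_sigma]
  simp only [Finset.univ_unique, Finset.sum_singleton, Finset.card_filter]

private lemma leg_bound {A T : Finset (Fin k)} (hsub : A ⊆ T)
    (hA : ∀ b ∈ A, (b : ℕ) + 1 < k)
    (hshift : ∀ b ∈ A, ∀ h : (b : ℕ) + 1 < k, (⟨(b : ℕ) + 1, h⟩ : Fin k) ∈ T)
    (hne : A.Nonempty) : A.card + 1 ≤ T.card := by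
  set m := A.max' hne with hm
  have hmA : m ∈ A := A.max'_mem hne
  have hlt : (m : ℕ) + 1 < k := hA m hmA
  set x : Fin k := ⟨(m : ℕ) + 1, hlt⟩ with hx
  have hxT : x ∈ T := hshift m hmA hlt
  have hxA : x ∉ A := by
    intro hxA
    have := A.le_max' x hxA
    simp only [hx, Fin.le_def] at this
    omega
  have hins : insert x A ⊆ T := Finset.insert_subset hxT hsub
  calc A.card + 1 = (insert x A).card := (Finset.card_insert_of_notMem hxA).symm
    _ ≤ T.card := Finset.card_le_card hins

private lemma ncard_compl_roots {s k : ℕ} (hk1 : k - 1 < k)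
    (T : Set (SpiderVtx s (fun _ : Fin s => k)))
    (hc : Sum.inl () ∈ T)
    (hmem : ∀ (i : Fin s) (b : Fin k), Sum.inr ⟨i, b⟩ ∈ T ↔ ¬((b : ℕ) = k - 1)) :
    T.ncard = s * (k - 1) + 1 := by
  rw [ncard_vertex_set, if_pos hc]
  have hcA : ∀ i : Fin s, (Finset.univ.filter fun b : Fin k =>
      (Sum.inr ⟨i, b⟩ : SpiderVtx s (fun _ : Fin s => k)) ∈ T).card = k - 1 := by
    intro i
    have hAtop : (Finset.univ.filter fun b : Fin k =>
        (Sum.inr ⟨i, b⟩ : SpiderVtx s (fun _ : Fin s => k)) ∈ T) =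
        Finset.univ.erase ⟨k - 1, hk1⟩ := by
      ext b
      simp only [Finset.mem_filter, Finset.mem_erase, Finset.mem_univ, true_and, and_true,
        hmem]
      constructor
      · intro h hb
        exact h (by rw [hb])
      · intro h hb
        exact h (Fin.ext hb)
    rw [hAtop, Finset.card_erase_of_mem (Finset.mem_univ _), Finset.card_univ,
      Fintype.card_fin]
  simp only [hcA, Finset.sum_const, Finset.card_univ, Fintype.card_fin, smul_eq_mul]
  omega

private lemma filter_univ_of_mem {s k : ℕ} (q : Set (Fin s × Fin k)) (hq : ∀ p, p ∈ q)
    (i : Fin s) : (Finset.univ.filter fun a : Fin k => (i, a) ∈ q) = Finset.univ :=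
  Finset.filter_true_of_mem fun a _ => hq (i, a)

private lemma edges_full {s k : ℕ} (hk : 1 ≤ k)
    (T : Set (SpiderVtx s (fun _ : Fin s => k)))
    (hc : Sum.inl () ∈ T)
    (hmem : ∀ (i : Fin s) (b : Fin k), Sum.inr ⟨i, b⟩ ∈ T ↔ ¬((b : ℕ) = k - 1)) :
    edgesTouching (SpiderGraph s fun _ => k) T = s * k := by
  rw [edgesTouching_spider, ncard_prod_set]
  have hall : ∀ p : Fin s × Fin k, p ∈ {p : Fin s × Fin k |
      spiderVtx (fun _ : Fin s => k) p.1 (p.2 : ℕ) ∈ T ∨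
      spiderVtx (fun _ : Fin s => k) p.1 ((p.2 : ℕ) + 1) ∈ T} := by
    rintro ⟨i, a⟩
    simp only [Set.mem_setOf_eq]
    left
    rcases Nat.eq_zero_or_pos (a : ℕ) with h0 | hp
    · rw [h0, sv_zero]
      exact hc
    · rw [sv_pos i hp (le_of_lt a.2) (by omega)]
      rw [hmem]
      simp only [Fin.val_mk]
      have ha := a.2
      omega
  simp only [filter_univ_of_mem _ hall, Finset.card_univ, Fintype.card_fin,
    Finset.sum_const, smul_eq_mul, mul_comm]

private lemma spider_main (s k : ℕ) (hs : 2 ≤ s) (hk : 1 ≤ k) :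
    IsBalanced (SpiderGraph s fun _ => k) (spiderRoots s fun _ => k) ∧
      rhoTop (SpiderGraph s fun _ => k) (spiderRoots s fun _ => k) =
        ((s * k : ℕ) : ℝ) / ((s * (k - 1) + 1 : ℕ) : ℝ) := by
  obtain ⟨k1, rfl⟩ : ∃ k1, k = k1 + 1 := ⟨k - 1, by omega⟩
  obtain ⟨s1, rfl⟩ : ∃ s1, s = s1 + 2 := ⟨s - 2, by omega⟩
  set s := s1 + 2 with hs_def
  set k := k1 + 1 with hk_def
  have hk1 : k - 1 < k := by omega
  set R := spiderRoots s (fun _ : Fin s => k) with hRdef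
  have hv1 : ∀ (i : Fin s) (b : Fin k),
      spiderVtx (fun _ : Fin s => k) i ((b : ℕ) + 1) = Sum.inr ⟨i, b⟩ := by
    intro i b
    rw [sv_pos i (by omega) b.2 (by omega)]
    exact congrArg (fun z => Sum.inr (⟨i, z⟩ : Σ _ : Fin s, Fin k))
      (Fin.ext (by simp))
  have hRmem : ∀ x : SpiderVtx s (fun _ : Fin s => k),
      x ∈ R ↔ ∃ j : Fin s, x = Sum.inr ⟨j, ⟨k - 1, hk1⟩⟩ := by
    intro x
    constructor
    · rintro ⟨j, rfl⟩
      exact ⟨j, sv_pos j hk le_rfl hk1⟩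
    · rintro ⟨j, rfl⟩
      exact ⟨j, sv_pos j hk le_rfl hk1⟩
  have hcentreR : (Sum.inl () : SpiderVtx s (fun _ : Fin s => k)) ∈ Rᶜ := by
    rw [Set.mem_compl_iff, hRmem]
    rintro ⟨j, h⟩
    simp at h
  have hinrR : ∀ (i : Fin s) (b : Fin k),
      (Sum.inr ⟨i, b⟩ : SpiderVtx s (fun _ : Fin s => k)) ∈ R ↔ (b : ℕ) = k - 1 := by
    intro i b
    rw [hRmem]
    constructor
    · rintro ⟨j, h⟩
      injection h with h'
      obtain ⟨rfl, h2⟩ := Sigma.mk.inj_iff.mp h'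
      exact congrArg Fin.val (eq_of_heq h2)
    · intro hb
      exact ⟨i, congrArg (fun z => Sum.inr (⟨i, z⟩ : Σ _ : Fin s, Fin k)) (Fin.ext hb)⟩
  have hedge : ∀ S : Set (SpiderVtx s (fun _ : Fin s => k)),
      edgesTouching (SpiderGraph s fun _ => k) S =
        ∑ i : Fin s, (Finset.univ.filter fun a : Fin k =>
        spiderVtx (fun _ : Fin s => k) i (a : ℕ) ∈ S ∨
        spiderVtx (fun _ : Fin s => k) i ((a : ℕ) + 1) ∈ S).card := by
    intro S
    rw [edgesTouching_spider, ncard_prod_set]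
    refine Finset.sum_congr rfl fun i _ => congrArg Finset.card ?_
    ext a
    simp [Set.mem_setOf_eq]
  have hmemRc : ∀ (i : Fin s) (b : Fin k),
      (Sum.inr ⟨i, b⟩ : SpiderVtx s (fun _ : Fin s => k)) ∈ (Rᶜ : Set _) ↔
        ¬((b : ℕ) = k - 1) := by
    intro i b
    rw [Set.mem_compl_iff]
    exact not_congr (hinrR i b)
  have hNtop := ncard_compl_roots hk1 (Rᶜ : Set (SpiderVtx s (fun _ : Fin s => k)))
    hcentreR hmemRc
  have hEtop := edges_full hk (Rᶜ : Set (SpiderVtx s (fun _ : Fin s => k))) hcentreR hmemRc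
  have hrho : rhoTop (SpiderGraph s fun _ : Fin s => k) R =
      ((s * k : ℕ) : ℝ) / ((s * (k - 1) + 1 : ℕ) : ℝ) := by
    rw [rhoTop, rho, hEtop, hNtop]
  refine ⟨?_, hrho⟩
  intro S hsub hne
  rw [hrho, rho]
  have hden1 : (0 : ℝ) < ((s * (k - 1) + 1 : ℕ) : ℝ) := by
    have h0 : 0 < s * (k - 1) + 1 := by omega
    exact_mod_cast h0
  have hden2 : (0 : ℝ) < (S.ncard : ℝ) := by
    have h0 : 0 < S.ncard := (Set.ncard_pos S.toFinite).mpr hne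
    exact_mod_cast h0
  rw [div_le_div_iff₀ hden1 hden2]
  have key : (s * k) * S.ncard ≤ edgesTouching (SpiderGraph s fun _ : Fin s => k) S * (s * (k - 1) + 1) := by
    set A : Fin s → Finset (Fin k) := fun i => Finset.univ.filter fun b : Fin k =>
      (Sum.inr ⟨i, b⟩ : SpiderVtx s (fun _ : Fin s => k)) ∈ S with hA_def
    set T : Fin s → Finset (Fin k) := fun i => Finset.univ.filter fun a : Fin k =>
      spiderVtx (fun _ : Fin s => k) i (a : ℕ) ∈ S ∨
      spiderVtx (fun _ : Fin s => k) i ((a : ℕ) + 1) ∈ S with hT_def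
    have hmemA : ∀ (i : Fin s) (b : Fin k),
        b ∈ A i ↔ (Sum.inr ⟨i, b⟩ : SpiderVtx s (fun _ : Fin s => k)) ∈ S := by
      intro i b
      rw [hA_def]
      exact ⟨fun h => (Finset.mem_filter.mp h).2,
        fun h => Finset.mem_filter.mpr ⟨Finset.mem_univ _, h⟩⟩
    have hmemT : ∀ (i : Fin s) (a : Fin k),
        a ∈ T i ↔ (spiderVtx (fun _ : Fin s => k) i (a : ℕ) ∈ S ∨
          spiderVtx (fun _ : Fin s => k) i ((a : ℕ) + 1) ∈ S) := by
      intro i a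
      rw [hT_def]
      exact ⟨fun h => (Finset.mem_filter.mp h).2,
        fun h => Finset.mem_filter.mpr ⟨Finset.mem_univ _, h⟩⟩
    have hcard : S.ncard = (if Sum.inl () ∈ S then 1 else 0) + ∑ i : Fin s, (A i).card :=
      ncard_vertex_set S
    have hE : edgesTouching (SpiderGraph s fun _ : Fin s => k) S = ∑ i : Fin s, (T i).card := hedge S
    have hAT : ∀ i, A i ⊆ T i := by
      intro i b hb
      rw [hmemT]
      refine Or.inr ?_
      rw [hv1 i b]
      exact (hmemA i b).mp hb
    have hApart : ∀ i, ∀ b ∈ A i, (b : ℕ) + 1 < k := by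
      intro i b hb
      have hmem := hsub ((hmemA i b).mp hb)
      rw [Set.mem_compl_iff, hinrR] at hmem
      have hb2 := b.2
      omega
    have hshift : ∀ i, ∀ b ∈ A i, ∀ h : (b : ℕ) + 1 < k,
        (⟨(b : ℕ) + 1, h⟩ : Fin k) ∈ T i := by
      intro i b hb h
      rw [hmemT]
      refine Or.inl ?_
      show spiderVtx (fun _ : Fin s => k) i ((b : ℕ) + 1) ∈ S
      rw [hv1 i b]
      exact (hmemA i b).mp hb
    have hAcard : ∀ i, (A i).card ≤ k - 1 := by
      intro i
      have hsubA : A i ⊆ Finset.univ.erase ⟨k - 1, hk1⟩ := by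
        intro b hb
        rw [Finset.mem_erase]
        refine ⟨?_, Finset.mem_univ _⟩
        intro hbe
        have h1 := hApart i b hb
        rw [hbe] at h1
        simp only [Fin.val_mk] at h1
        omega
      calc (A i).card ≤ (Finset.univ.erase (⟨k - 1, hk1⟩ : Fin k)).card :=
            Finset.card_le_card hsubA
        _ = k - 1 := by
            rw [Finset.card_erase_of_mem (Finset.mem_univ _), Finset.card_univ,
              Fintype.card_fin]
    by_cases hc : Sum.inl () ∈ S
    · have hzeroT : ∀ i, (⟨0, by omega⟩ : Fin k) ∈ T i := by
        intro i
        rw [hmemT]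
        refine Or.inl ?_
        show spiderVtx (fun _ : Fin s => k) i 0 ∈ S
        rw [sv_zero]
        exact hc
      have hub : ∀ i, (A i).card + 1 ≤ (T i).card := by
        intro i
        rcases (A i).eq_empty_or_nonempty with he | hne'
        · rw [he]
          simp only [Finset.card_empty, zero_add]
          exact Finset.card_pos.mpr ⟨_, hzeroT i⟩
        · exact leg_bound (hAT i) (hApart i) (hshift i) hne'
      have hEle : (∑ i : Fin s, (A i).card) + s ≤ edgesTouching (SpiderGraph s fun _ : Fin s => k) S := by
        rw [hE]
        calc (∑ i : Fin s, (A i).card) + s = ∑ i : Fin s, ((A i).card + 1) := by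
              rw [Finset.sum_add_distrib, Finset.sum_const, Finset.card_univ,
                Fintype.card_fin, smul_eq_mul, mul_one]
          _ ≤ ∑ i : Fin s, (T i).card := Finset.sum_le_sum fun i _ => hub i
      have hM : (∑ i : Fin s, (A i).card) ≤ s * (k - 1) := by
        calc ∑ i : Fin s, (A i).card ≤ ∑ _i : Fin s, (k - 1) :=
              Finset.sum_le_sum fun i _ => hAcard i
          _ = s * (k - 1) := by
              rw [Finset.sum_const, Finset.card_univ, Fintype.card_fin, smul_eq_mul]
      rw [hcard, if_pos hc]
      set M := ∑ i : Fin s, (A i).card with hM_def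
      have h1 : s * k * (1 + M) ≤ (M + s) * (s * (k - 1) + 1) := by
        have hint : s1 * M ≤ s1 * (s * (k - 1)) := mul_le_mul_right hM s1
        simp only [hs_def, hk_def, Nat.add_sub_cancel] at hM hint ⊢
        nlinarith [hM, hint]
      calc s * k * (1 + M) ≤ (M + s) * (s * (k - 1) + 1) := h1
        _ ≤ edgesTouching (SpiderGraph s fun _ : Fin s => k) S * (s * (k - 1) + 1) := Nat.mul_le_mul_right _ hEle
    · set t := (Finset.univ.filter fun i : Fin s => (A i).Nonempty).card with ht_def
      have hub : ∀ i, (A i).card + (if (A i).Nonempty then 1 else 0) ≤ (T i).card := by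
        intro i
        rcases (A i).eq_empty_or_nonempty with he | hne'
        · have hno : ¬(A i).Nonempty := by
            rw [he]
            exact Finset.not_nonempty_empty
          rw [if_neg hno, he]
          simp
        · rw [if_pos hne']
          exact leg_bound (hAT i) (hApart i) (hshift i) hne'
      have hEle : (∑ i : Fin s, (A i).card) + t ≤ edgesTouching (SpiderGraph s fun _ : Fin s => k) S := by
        rw [hE, ht_def, Finset.card_filter]
        calc (∑ i : Fin s, (A i).card) + ∑ i : Fin s, (if (A i).Nonempty then 1 else 0)
            = ∑ i : Fin s, ((A i).card + if (A i).Nonempty then 1 else 0) := by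
              rw [Finset.sum_add_distrib]
          _ ≤ ∑ i : Fin s, (T i).card := Finset.sum_le_sum fun i _ => hub i
      have hMt : (∑ i : Fin s, (A i).card) ≤ t * (k - 1) := by
        have hzero : ∀ i ∈ (Finset.univ : Finset (Fin s)),
            i ∉ Finset.univ.filter (fun i : Fin s => (A i).Nonempty) → (A i).card = 0 := by
          intro i _ hi
          rw [Finset.mem_filter] at hi
          push_neg at hi
          rw [hi (Finset.mem_univ i)]
          rfl
        rw [← Finset.sum_subset (Finset.filter_subset _ _) hzero]
        calc ∑ i ∈ Finset.univ.filter (fun i : Fin s => (A i).Nonempty), (A i).card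
            ≤ ∑ _i ∈ Finset.univ.filter (fun i : Fin s => (A i).Nonempty), (k - 1) :=
              Finset.sum_le_sum fun i _ => hAcard i
          _ = t * (k - 1) := by rw [Finset.sum_const, smul_eq_mul, ht_def]
      have ht1 : 1 ≤ t := by
        obtain ⟨x, hx⟩ := hne
        rcases x with u | ⟨i, b⟩
        · cases u
          exact absurd hx hc
        · rw [ht_def]
          refine Nat.succ_le_of_lt (Finset.card_pos.mpr ⟨i, ?_⟩)
          rw [Finset.mem_filter]
          exact ⟨Finset.mem_univ _, ⟨b, (hmemA i b).mpr hx⟩⟩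
      rw [hcard, if_neg hc]
      set M := ∑ i : Fin s, (A i).card with hM_def
      have h1 : s * k * (0 + M) ≤ (M + t) * (s * (k - 1) + 1) := by
        have hint : s * M ≤ s * (t * (k - 1)) := mul_le_mul_right hMt s
        simp only [hs_def, hk_def, Nat.add_sub_cancel] at hMt hint ⊢
        nlinarith [hMt, hint, ht1]
      calc s * k * (0 + M) ≤ (M + t) * (s * (k - 1) + 1) := h1
        _ ≤ edgesTouching (SpiderGraph s fun _ : Fin s => k) S * (s * (k - 1) + 1) := Nat.mul_le_mul_right _ hEle
  exact_mod_cast key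

end SpiderAux

/-- the `s`-legged spider with length vector `(k, …, k)`, rooted at its
leaves, is balanced, and `ρ(F) = sk / (s(k-1) + 1)`. -/
theorem spider_balanced_and_rho (s k : ℕ) (hs : 2 ≤ s) (hk : 1 ≤ k) :
    IsBalanced (SpiderGraph s fun _ => k) (spiderRoots s fun _ => k) ∧
      rhoTop (SpiderGraph s fun _ => k) (spiderRoots s fun _ => k) =
        ((s * k : ℕ) : ℝ) / ((s * (k - 1) + 1 : ℕ) : ℝ) :=
  spider_main s k hs hk

end ExtremalSubdivision
end
end

section
/- Let s ≥ 2 and k_1,…,k_s ≥ 1 be integers, and let F be the s-legged spider with length vector (k_1,…,k_s), viewed as a rooted graph whose roots are its s leaves. Then F is balanced if and only if k_1 + … + k_s ≥ (s−1) · max_{1 ≤ i ≤ s} k_i. -/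
open Finset Filter

noncomputable section

namespace ExtremalSubdivision

universe u

section SpiderHelpers

open Classical

variable {s : ℕ} (kv : Fin s → ℕ)

private lemma vtx_zero (i : Fin s) : spiderVtx kv i 0 = Sum.inl () := by
  rw [spiderVtx, dif_neg]; omega

private lemma vtx_pos (i : Fin s) (a : ℕ) (h1 : 1 ≤ a) (h2 : a ≤ kv i) :
    spiderVtx kv i a = Sum.inr ⟨i, ⟨a - 1, by omega⟩⟩ := by
  rw [spiderVtx, dif_pos ⟨h1, h2⟩]

private lemma vtx_eq_cases {i j : Fin s} {a b : ℕ} (ha : a ≤ kv i) (hb : b ≤ kv j)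
    (h : spiderVtx kv i a = spiderVtx kv j b) : (a = 0 ∧ b = 0) ∨ (i = j ∧ a = b) := by
  by_cases h1 : 1 ≤ a
  · by_cases h2 : 1 ≤ b
    · rw [vtx_pos kv i a h1 ha, vtx_pos kv j b h2 hb] at h
      obtain ⟨hij, hval⟩ := Sigma.mk.inj_iff.mp (Sum.inr.inj h)
      subst hij
      right
      refine ⟨rfl, ?_⟩
      have := congrArg Fin.val (eq_of_heq hval)
      simp only at this
      omega
    · rw [vtx_pos kv i a h1 ha, spiderVtx, dif_neg (by omega)] at h
      exact absurd h (by simp)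
  · by_cases h2 : 1 ≤ b
    · rw [spiderVtx, dif_neg (by omega), vtx_pos kv j b h2 hb] at h
      exact absurd h (by simp)
    · left; omega

private lemma vtx_ne_succ {i : Fin s} {a : ℕ} (h : a < kv i) :
    spiderVtx kv i a ≠ spiderVtx kv i (a + 1) := by
  intro hc
  rcases vtx_eq_cases kv (by omega) (by omega) hc with ⟨_, h2⟩ | ⟨_, h2⟩ <;> omega

private lemma spider_adj (x y : SpiderVtx s kv) :
    (SpiderGraph s kv).Adj x y ↔ ∃ (i : Fin s) (a : ℕ), a < kv i ∧
      ((x = spiderVtx kv i a ∧ y = spiderVtx kv i (a + 1)) ∨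
       (y = spiderVtx kv i a ∧ x = spiderVtx kv i (a + 1))) := by
  rw [SpiderGraph, SimpleGraph.fromRel_adj]
  constructor
  · rintro ⟨-, ⟨i, a, hik, hx, hy⟩ | ⟨i, a, hik, hy, hx⟩⟩
    · exact ⟨i, a, hik, Or.inl ⟨hx, hy⟩⟩
    · exact ⟨i, a, hik, Or.inr ⟨hy, hx⟩⟩
  · rintro ⟨i, a, hik, ⟨hx, hy⟩ | ⟨hy, hx⟩⟩
    · exact ⟨by rw [hx, hy]; exact vtx_ne_succ kv hik, Or.inl ⟨i, a, hik, hx, hy⟩⟩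
    · exact ⟨by rw [hx, hy]; exact (vtx_ne_succ kv hik).symm, Or.inr ⟨i, a, hik, hy, hx⟩⟩

/-- The edge of leg `p.1` from vertex number `p.2` to `p.2 + 1`. -/
private def eIdx (p : Σ i : Fin s, Fin (kv i)) : Sym2 (SpiderVtx s kv) :=
  s(spiderVtx kv p.1 p.2.val, spiderVtx kv p.1 (p.2.val + 1))

private lemma edgeSet_eq :
    (SpiderGraph s kv).edgeSet = Set.range (eIdx kv) := by
  ext e
  induction e with
  | _ x y =>
    rw [SimpleGraph.mem_edgeSet, spider_adj]
    constructor
    · rintro ⟨i, a, hik, ⟨hx, hy⟩ | ⟨hy, hx⟩⟩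
      · exact ⟨⟨i, ⟨a, hik⟩⟩, by rw [eIdx, hx, hy]⟩
      · exact ⟨⟨i, ⟨a, hik⟩⟩, by rw [eIdx, hx, hy, Sym2.eq_swap]⟩
    · rintro ⟨⟨i, a⟩, hp⟩
      simp only [eIdx] at hp
      rcases Sym2.eq_iff.mp hp with ⟨h1, h2⟩ | ⟨h1, h2⟩
      · exact ⟨i, a.val, a.isLt, Or.inl ⟨h1.symm, h2.symm⟩⟩
      · exact ⟨i, a.val, a.isLt, Or.inr ⟨h1.symm, h2.symm⟩⟩

private lemma eIdx_inj : Function.Injective (eIdx kv) := by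
  rintro ⟨i, a⟩ ⟨j, b⟩ h
  simp only [eIdx] at h
  have hai : a.val ≤ kv i := le_of_lt a.isLt
  have hbj : b.val ≤ kv j := le_of_lt b.isLt
  rcases Sym2.eq_iff.mp h with ⟨h1, h2⟩ | ⟨h1, h2⟩
  · rcases vtx_eq_cases kv hai hbj h1 with ⟨ha0, hb0⟩ | ⟨hij, hab⟩
    · rcases vtx_eq_cases kv (by omega) (by omega) h2 with ⟨h3, _⟩ | ⟨hij, _⟩
      · omega
      · subst hij; congr 1; exact Fin.ext (by omega)
    · subst hij; congr 1; exact Fin.ext hab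
  · rcases vtx_eq_cases kv hai (by omega) h1 with ⟨_, h3⟩ | ⟨hij, hab⟩
    · omega
    · rcases vtx_eq_cases kv (by omega) hbj h2 with ⟨h3, _⟩ | ⟨_, hab'⟩
      · omega
      · exfalso; omega

private lemma edgesTouching_eq (S : Set (SpiderVtx s kv)) :
    edgesTouching (SpiderGraph s kv) S =
      {p : Σ i : Fin s, Fin (kv i) |
        spiderVtx kv p.1 p.2.val ∈ S ∨ spiderVtx kv p.1 (p.2.val + 1) ∈ S}.ncard := by
  rw [edgesTouching]
  have heq : {e ∈ (SpiderGraph s kv).edgeSet | ∃ x ∈ S, x ∈ e} =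
      eIdx kv '' {p : Σ i : Fin s, Fin (kv i) |
        spiderVtx kv p.1 p.2.val ∈ S ∨ spiderVtx kv p.1 (p.2.val + 1) ∈ S} := by
    ext e
    simp only [Set.mem_setOf_eq, Set.mem_image, edgeSet_eq, Set.mem_sep_iff, Set.mem_range]
    constructor
    · rintro ⟨⟨p, rfl⟩, x, hxS, hxe⟩
      refine ⟨p, ?_, rfl⟩
      rcases Sym2.mem_iff.mp hxe with h | h
      · exact Or.inl (h ▸ hxS)
      · exact Or.inr (h ▸ hxS)
    · rintro ⟨p, hp, rfl⟩
      refine ⟨⟨p, rfl⟩, ?_⟩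
      rcases hp with h | h
      · exact ⟨_, h, Sym2.mem_mk_left _ _⟩
      · exact ⟨_, h, Sym2.mem_mk_right _ _⟩
  rw [heq, Set.ncard_image_of_injective _ (eIdx_inj kv)]

private lemma mem_roots_iff (hkv : ∀ i, 1 ≤ kv i) (i : Fin s) (a : ℕ) (ha : a ≤ kv i) :
    spiderVtx kv i a ∈ spiderRoots s kv ↔ a = kv i := by
  constructor
  · rintro ⟨j, hj⟩
    rcases vtx_eq_cases kv le_rfl ha hj with ⟨h1, _⟩ | ⟨hij, hab⟩
    · have := hkv j; omega
    · subst hij; omega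
  · rintro rfl; exact ⟨i, rfl⟩

private lemma vtx_nonroot (hkv : ∀ i, 1 ≤ kv i) (i : Fin s) (a : ℕ) (ha : a < kv i) :
    spiderVtx kv i a ∈ (spiderRoots s kv)ᶜ := by
  intro h
  rw [mem_roots_iff kv hkv i a (le_of_lt ha)] at h
  omega

end SpiderHelpers


section SpiderCount

variable {s : ℕ} (kv : Fin s → ℕ)

private lemma card_idx : Nat.card (Σ i : Fin s, Fin (kv i)) = ∑ i, kv i := by
  simp [Nat.card_eq_fintype_card]

private lemma card_vtx : Nat.card (SpiderVtx s kv) = 1 + ∑ i, kv i := by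
  simp [Nat.card_eq_fintype_card, SpiderVtx]

private lemma sum_ge (hkv : ∀ i, 1 ≤ kv i) : s ≤ ∑ i, kv i := by
  calc s = ∑ _i : Fin s, 1 := by simp
  _ ≤ ∑ i, kv i := Finset.sum_le_sum fun i _ => hkv i

private lemma roots_ncard (hkv : ∀ i, 1 ≤ kv i) : (spiderRoots s kv).ncard = s := by
  have hinj : Function.Injective (fun i => spiderVtx kv i (kv i)) := by
    intro i j hij
    rcases vtx_eq_cases kv le_rfl le_rfl hij with ⟨h1, _⟩ | ⟨h1, _⟩
    · have := hkv i; omega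
    · exact h1
  rw [spiderRoots, ← Set.image_univ, Set.ncard_image_of_injective _ hinj,
    Set.ncard_univ, Nat.card_eq_fintype_card, Fintype.card_fin]

private lemma nonroots_ncard (hkv : ∀ i, 1 ≤ kv i) :
    (spiderRoots s kv)ᶜ.ncard = 1 + ∑ i, kv i - s := by
  have := Set.ncard_add_ncard_compl (spiderRoots s kv) (Set.toFinite _) (Set.toFinite _)
  rw [roots_ncard kv hkv, card_vtx] at this
  omega

private lemma rhoTop_val (hkv : ∀ i, 1 ≤ kv i) :
    rhoTop (SpiderGraph s kv) (spiderRoots s kv) =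
      ((∑ i, kv i : ℕ) : ℝ) / ((1 + ∑ i, kv i - s : ℕ) : ℝ) := by
  rw [rhoTop, rho, nonroots_ncard kv hkv, edgesTouching_eq]
  congr 2
  have : {p : Σ i : Fin s, Fin (kv i) |
      spiderVtx kv p.1 p.2.val ∈ (spiderRoots s kv)ᶜ ∨
      spiderVtx kv p.1 (p.2.val + 1) ∈ (spiderRoots s kv)ᶜ} = Set.univ := by
    ext p
    simp only [Set.mem_setOf_eq, Set.mem_univ, iff_true]
    exact Or.inl (vtx_nonroot kv hkv p.1 p.2.val p.2.isLt)
  rw [this, Set.ncard_univ, card_idx]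

end SpiderCount

private lemma arith_caseB (Kr sr kr nr cr Tr : ℝ) (h1 : (sr - 1) * kr ≤ Kr)
    (h2 : nr + cr ≤ Tr) (h3 : nr ≤ cr * (kr - 1)) (h4 : 1 ≤ cr) (h5 : 0 ≤ sr - 1)
    (h6 : 0 < Kr - sr + 1) : Kr * nr ≤ Tr * (Kr - sr + 1) := by
  have hprod : (kr - 1) * (sr - 1) ≤ Kr - sr + 1 := by nlinarith
  have e1 : nr * (sr - 1) ≤ cr * (Kr - sr + 1) := by
    nlinarith [mul_le_mul_of_nonneg_right h3 h5,
      mul_le_mul_of_nonneg_left hprod (by linarith : (0:ℝ) ≤ cr)]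
  nlinarith [mul_le_mul_of_nonneg_right h2 (le_of_lt h6)]

/-- the `s`-legged spider with length vector `(k_1, …, k_s)`, rooted at
its leaves, is balanced if and only if `k_1 + ⋯ + k_s ≥ (s - 1) max_i k_i`. -/
theorem spider_balanced_iff (s : ℕ) (hs : 2 ≤ s) (kv : Fin s → ℕ) (hkv : ∀ i, 1 ≤ kv i) :
    IsBalanced (SpiderGraph s kv) (spiderRoots s kv) ↔
      (s - 1) * (Finset.univ.sup kv) ≤ ∑ i, kv i := by
  classical
  set K := ∑ i, kv i with hKdef
  set k := Finset.univ.sup kv with hkdef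
  have hsK : s ≤ K := sum_ge kv hkv
  have hle : ∀ i, kv i ≤ k := fun i => Finset.le_sup (Finset.mem_univ i)
  have hBcast : ((1 + K - s : ℕ) : ℝ) = (K : ℝ) - s + 1 := by
    rw [Nat.cast_sub (by omega)]; push_cast; ring
  have hBpos : (0:ℝ) < (K : ℝ) - s + 1 := by
    have : (s:ℝ) ≤ (K:ℝ) := by exact_mod_cast hsK
    have : (2:ℝ) ≤ (s:ℝ) := by exact_mod_cast hs
    linarith
  constructor
  · intro hbal
    by_cases hk1 : k ≤ 1
    · calc (s-1) * k ≤ (s-1) * 1 := Nat.mul_le_mul_left _ hk1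
        _ ≤ K := by omega
    push_neg at hk1
    obtain ⟨i0, -, hi0⟩ := Finset.exists_mem_eq_sup Finset.univ
      ⟨⟨0, by omega⟩, Finset.mem_univ _⟩ kv
    rw [← hkdef] at hi0
    set S0 : Set (SpiderVtx s kv) := spiderVtx kv i0 '' ↑(Finset.Ico 1 k) with hS0def
    have hS0sub : S0 ⊆ (spiderRoots s kv)ᶜ := by
      rintro x ⟨a, ha, rfl⟩
      simp only [Finset.coe_Ico, Set.mem_Ico] at ha
      exact vtx_nonroot kv hkv i0 a (by omega)
    have hS0ne : S0.Nonempty := by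
      refine ⟨spiderVtx kv i0 1, ⟨1, ?_, rfl⟩⟩
      simp only [Finset.coe_Ico, Set.mem_Ico]
      omega
    have hS0card : S0.ncard = k - 1 := by
      rw [hS0def, Set.ncard_image_of_injOn, Set.ncard_coe_finset, Nat.card_Ico]
      intro a ha b hb hab
      simp only [Finset.coe_Ico, Set.mem_Ico] at ha hb
      rcases vtx_eq_cases kv (by omega) (by omega) hab with ⟨h1, _⟩ | ⟨_, h1⟩ <;> omega
    have hTeq : {p : Σ i : Fin s, Fin (kv i) |
        spiderVtx kv p.1 p.2.val ∈ S0 ∨ spiderVtx kv p.1 (p.2.val + 1) ∈ S0} =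
        {p : Σ i : Fin s, Fin (kv i) | p.1 = i0} := by
      ext ⟨i, b⟩
      simp only [Set.mem_setOf_eq]
      constructor
      · rintro (h | h)
        · obtain ⟨a, ha, heq⟩ := h
          simp only [Finset.coe_Ico, Set.mem_Ico] at ha
          rcases vtx_eq_cases kv (by omega) (le_of_lt b.isLt) heq with ⟨h1, _⟩ | ⟨h1, _⟩
          · omega
          · exact h1.symm
        · obtain ⟨a, ha, heq⟩ := h
          simp only [Finset.coe_Ico, Set.mem_Ico] at ha
          rcases vtx_eq_cases kv (by omega) b.isLt heq with ⟨h1, _⟩ | ⟨h1, _⟩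
          · omega
          · exact h1.symm
      · rintro rfl
        by_cases hb1 : 1 ≤ b.val
        · left
          exact ⟨b.val, by simp only [Finset.coe_Ico, Set.mem_Ico]; have := b.isLt; omega, rfl⟩
        · right
          refine ⟨b.val + 1, ?_, rfl⟩
          simp only [Finset.coe_Ico, Set.mem_Ico]
          have := b.isLt; omega
    have hTcard : {p : Σ i : Fin s, Fin (kv i) | p.1 = i0}.ncard = k := by
      have hrange : {p : Σ i : Fin s, Fin (kv i) | p.1 = i0} = Set.range (Sigma.mk i0) := by
        ext ⟨i, b⟩
        simp only [Set.mem_setOf_eq, Set.mem_range]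
        constructor
        · rintro rfl; exact ⟨b, rfl⟩
        · rintro ⟨c, hc⟩
          exact (congrArg Sigma.fst hc).symm
      rw [hrange, ← Set.image_univ, Set.ncard_image_of_injective _ sigma_mk_injective,
        Set.ncard_univ, Nat.card_eq_fintype_card, Fintype.card_fin, ← hi0]
    have h1 := hbal S0 hS0sub hS0ne
    rw [rhoTop_val kv hkv] at h1
    unfold rho at h1
    rw [edgesTouching_eq, hTeq, hTcard, hS0card, hBcast] at h1
    rw [show ((k - 1 : ℕ) : ℝ) = (k:ℝ) - 1 by rw [Nat.cast_sub (by omega)]; norm_num] at h1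
    have hk1R : (0:ℝ) < (k:ℝ) - 1 := by
      have : (2:ℝ) ≤ (k:ℝ) := by exact_mod_cast hk1
      linarith
    rw [div_le_div_iff₀ hBpos hk1R] at h1
    have h3 : ((s:ℝ) - 1) * (k:ℝ) ≤ (K:ℝ) := by nlinarith
    have h4 : (((s - 1 : ℕ) * k : ℕ) : ℝ) ≤ (K:ℝ) := by
      push_cast [Nat.cast_sub (by omega : 1 ≤ s)]
      linarith
    exact_mod_cast h4
  · intro hineq S hSsub hSne
    have hKkR : ((s:ℝ) - 1) * (k:ℝ) ≤ (K:ℝ) := by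
      have : (((s - 1 : ℕ) * k : ℕ) : ℝ) ≤ (K:ℝ) := by exact_mod_cast hineq
      rw [Nat.cast_mul, Nat.cast_sub (by omega : 1 ≤ s)] at this
      push_cast at this
      linarith
    have hn1 : 1 ≤ S.ncard := (Set.ncard_pos (Set.toFinite _)).2 hSne
    have hnle : S.ncard ≤ 1 + K - s := by
      have := Set.ncard_le_ncard hSsub (Set.toFinite _)
      rwa [nonroots_ncard kv hkv] at this
    rw [rhoTop_val kv hkv]
    unfold rho
    rw [edgesTouching_eq, hBcast]
    set T : Set (Σ i : Fin s, Fin (kv i)) :=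
      {p | spiderVtx kv p.1 p.2.val ∈ S ∨ spiderVtx kv p.1 (p.2.val + 1) ∈ S} with hTdef
    set n := S.ncard with hndef
    have hnpos : (0:ℝ) < (n:ℝ) := by exact_mod_cast hn1
    rw [div_le_div_iff₀ hBpos hnpos]
    -- goal : K * n ≤ T.ncard * (K - s + 1)
    set T2 : Set (Σ i : Fin s, Fin (kv i)) :=
      {p | 1 ≤ p.2.val ∧ spiderVtx kv p.1 p.2.val ∈ S} with hT2def
    have hT2sub : T2 ⊆ T := fun p hp => Or.inl hp.2
    have hnr : ∀ (i : Fin s) (b : Fin (kv i)), Sum.inr ⟨i, b⟩ ∈ S → b.val + 1 < kv i := by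
      intro i b hvS
      have hv2 : (Sum.inr ⟨i, b⟩ : SpiderVtx s kv) = spiderVtx kv i (b.val + 1) := by
        rw [vtx_pos kv i (b.val + 1) (by omega) b.isLt]
        exact congrArg Sum.inr (congrArg (Sigma.mk i) (Fin.ext (by simp)))
      have h3 := hSsub hvS
      rw [hv2] at h3
      have h4 : b.val + 1 ≠ kv i := fun hcon =>
        h3 ((mem_roots_iff kv hkv i (b.val + 1) (by omega)).mpr hcon)
      have := b.isLt
      omega
    have himg : (fun p : Σ i : Fin s, Fin (kv i) => spiderVtx kv p.1 p.2.val) '' T2 =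
        S \ {Sum.inl ()} := by
      ext v
      constructor
      · rintro ⟨p, ⟨hp1, hp2⟩, rfl⟩
        refine ⟨hp2, ?_⟩
        show spiderVtx kv p.1 p.2.val ∉ ({Sum.inl ()} : Set (SpiderVtx s kv))
        rw [vtx_pos kv p.1 p.2.val hp1 (le_of_lt p.2.isLt)]
        simp
      · rintro ⟨hvS, hvne⟩
        match v with
        | Sum.inl () => exact absurd rfl hvne
        | Sum.inr ⟨i, b⟩ =>
          have hb : b.val + 1 < kv i := hnr i b hvS
          have hv2 : (Sum.inr ⟨i, b⟩ : SpiderVtx s kv) = spiderVtx kv i (b.val + 1) := by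
            rw [vtx_pos kv i (b.val + 1) (by omega) b.isLt]
            exact congrArg Sum.inr (congrArg (Sigma.mk i) (Fin.ext (by simp)))
          refine ⟨⟨i, ⟨b.val + 1, hb⟩⟩, ⟨Nat.succ_le_succ (Nat.zero_le _), ?_⟩, ?_⟩
          · rw [← hv2]; exact hvS
          · exact hv2.symm
    have hinjT2 : Set.InjOn (fun p : Σ i : Fin s, Fin (kv i) => spiderVtx kv p.1 p.2.val) T2 := by
      intro p hp q hq heq
      rcases vtx_eq_cases kv (le_of_lt p.2.isLt) (le_of_lt q.2.isLt) heq with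
        ⟨h1, _⟩ | ⟨h1, h2⟩
      · exact absurd h1 (by have := hp.1; omega)
      · obtain ⟨i, b⟩ := p
        obtain ⟨j, c⟩ := q
        simp only at h1 h2
        subst h1
        exact congrArg (Sigma.mk i) (Fin.ext h2)
    have hT2card : T2.ncard = (S \ {Sum.inl ()}).ncard := by
      rw [← himg, Set.ncard_image_of_injOn hinjT2]
    by_cases hu : (Sum.inl () : SpiderVtx s kv) ∈ S
    · -- centre in S
      have hT2n : T2.ncard = n - 1 := by
        rw [hT2card, Set.ncard_diff_singleton_of_mem hu]
      set T1 : Set (Σ i : Fin s, Fin (kv i)) := {p | p.2.val = 0} with hT1def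
      have hT1sub : T1 ⊆ T := by
        intro p hp
        left
        have hp0 : p.2.val = 0 := hp
        rw [hp0, vtx_zero]
        exact hu
      have hT1card : T1.ncard = s := by
        have hrange : T1 = Set.range (fun i : Fin s =>
            (⟨i, ⟨0, hkv i⟩⟩ : Σ i : Fin s, Fin (kv i))) := by
          ext ⟨i, b⟩
          simp only [hT1def, Set.mem_setOf_eq, Set.mem_range]
          constructor
          · intro hb
            exact ⟨i, congrArg (Sigma.mk i) (Fin.ext hb.symm)⟩
          · rintro ⟨j, hj⟩
            obtain ⟨rfl, hj2⟩ := Sigma.mk.inj_iff.mp hj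
            have := congrArg Fin.val (eq_of_heq hj2)
            simpa using this.symm
        have hinj : Function.Injective (fun i : Fin s =>
            (⟨i, ⟨0, hkv i⟩⟩ : Σ i : Fin s, Fin (kv i))) :=
          fun a b hab => congrArg Sigma.fst hab
        rw [hrange, ← Set.image_univ, Set.ncard_image_of_injective _ hinj,
          Set.ncard_univ, Nat.card_eq_fintype_card, Fintype.card_fin]
      have hdisj : Disjoint T1 T2 := by
        rw [Set.disjoint_left]
        intro p hp1 hp2
        have h1 : p.2.val = 0 := hp1
        have h2 : 1 ≤ p.2.val := hp2.1
        omega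
      have hTlb : n - 1 + s ≤ T.ncard := by
        have hcu : (T1 ∪ T2).ncard = s + (n - 1) := by
          rw [Set.ncard_union_eq hdisj (Set.toFinite _) (Set.toFinite _), hT1card, hT2n]
        have hle2 : (T1 ∪ T2).ncard ≤ T.ncard :=
          Set.ncard_le_ncard (Set.union_subset hT1sub hT2sub) (Set.toFinite _)
        omega
      have hTcR : ((n:ℝ) - 1 + s) ≤ (T.ncard : ℝ) := by
        have : ((n - 1 + s : ℕ) : ℝ) ≤ (T.ncard : ℝ) := by exact_mod_cast hTlb
        rw [Nat.cast_add, Nat.cast_sub (by omega : 1 ≤ n)] at this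
        push_cast at this
        linarith
      have hnK : (n:ℝ) ≤ (K:ℝ) - s + 1 := by
        rw [← hBcast]; exact_mod_cast hnle
      have hs1 : (0:ℝ) ≤ (s:ℝ) - 1 := by
        have : (2:ℝ) ≤ (s:ℝ) := by exact_mod_cast hs
        linarith
      nlinarith [mul_le_mul_of_nonneg_right hTcR (le_of_lt hBpos),
        mul_le_mul_of_nonneg_left hnK hs1]
    · -- centre not in S
      have hT2n : T2.ncard = n := by
        rw [hT2card, Set.diff_singleton_eq_self hu]
      set A : Finset (Fin s) :=
        Finset.univ.filter (fun i => ∃ b : Fin (kv i), Sum.inr ⟨i, b⟩ ∈ S) with hAdef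
      obtain ⟨v, hv⟩ := hSne
      obtain ⟨i1, b1, rfl⟩ : ∃ i b, v = Sum.inr ⟨i, b⟩ := by
        match v with
        | Sum.inl () => exact absurd hv hu
        | Sum.inr ⟨i, b⟩ => exact ⟨i, b, rfl⟩
      have hi1A : i1 ∈ A := by
        rw [hAdef, Finset.mem_filter]
        exact ⟨Finset.mem_univ _, b1, hv⟩
      have hc1 : 1 ≤ A.card := Finset.card_pos.mpr ⟨i1, hi1A⟩
      have hk2 : 2 ≤ k := by
        have h5 := hnr i1 b1 hv
        have h6 := hle i1
        omega
      have hnc : n ≤ A.card * (k - 1) := by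
        have key := Set.ncard_le_ncard_of_injOn
          (s := S) (t := ↑(A ×ˢ Finset.range (k - 1)))
          (fun v => Sum.elim (fun _ => ((⟨0, by omega⟩ : Fin s), 0))
            (fun q => (q.1, q.2.val)) v)
          ?_ ?_ (Set.toFinite _)
        · rwa [Set.ncard_coe_finset, Finset.card_product, Finset.card_range] at key
        · intro w hw
          match w with
          | Sum.inl () => exact absurd hw hu
          | Sum.inr ⟨i, b⟩ =>
            simp only [Sum.elim_inr, Finset.coe_product, Set.mem_prod, Finset.mem_coe,
              Finset.mem_range]
            constructor
            · rw [hAdef, Finset.mem_filter]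
              exact ⟨Finset.mem_univ _, b, hw⟩
            · have h5 := hnr i b hw
              have h6 := hle i
              omega
        · intro w hw w' hw' hww
          match w, w' with
          | Sum.inl (), _ => exact absurd hw hu
          | Sum.inr ⟨i, b⟩, Sum.inl () => exact absurd hw' hu
          | Sum.inr ⟨i, b⟩, Sum.inr ⟨j, c⟩ =>
            simp only [Sum.elim_inr, Prod.mk.injEq] at hww
            obtain ⟨rfl, h2⟩ := hww
            exact congrArg Sum.inr (congrArg (Sigma.mk i) (Fin.ext h2))
      set T3 : Set (Σ i : Fin s, Fin (kv i)) :=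
        {p | spiderVtx kv p.1 p.2.val ∉ S ∧ spiderVtx kv p.1 (p.2.val + 1) ∈ S} with hT3def
      have hT3sub : T3 ⊆ T := fun p hp => Or.inr hp.2
      have hdisj : Disjoint T2 T3 := by
        rw [Set.disjoint_left]
        intro p hp2 hp3
        exact hp3.1 hp2.2
      have hT3c : A.card ≤ T3.ncard := by
        have key := Set.ncard_le_ncard_of_injOn
          (s := (↑A : Set (Fin s))) (t := T3)
          (fun i => if h : (Finset.univ.filter
              (fun b : Fin (kv i) => Sum.inr ⟨i, b⟩ ∈ S)).Nonempty
            then ⟨i, (Finset.univ.filter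
              (fun b : Fin (kv i) => Sum.inr ⟨i, b⟩ ∈ S)).min' h⟩
            else ⟨i, ⟨0, hkv i⟩⟩)
          ?_ ?_ (Set.toFinite _)
        · rwa [Set.ncard_coe_finset] at key
        · intro i hiA
          rw [Finset.mem_coe, hAdef, Finset.mem_filter] at hiA
          obtain ⟨-, b0, hb0⟩ := hiA
          have hBne : (Finset.univ.filter
              (fun b : Fin (kv i) => Sum.inr ⟨i, b⟩ ∈ S)).Nonempty :=
            ⟨b0, Finset.mem_filter.mpr ⟨Finset.mem_univ _, hb0⟩⟩
          simp only [dif_pos hBne]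
          set m := (Finset.univ.filter
              (fun b : Fin (kv i) => Sum.inr ⟨i, b⟩ ∈ S)).min' hBne with hmdef
          have hmS : Sum.inr ⟨i, m⟩ ∈ S :=
            (Finset.mem_filter.mp (Finset.min'_mem _ hBne)).2
          have hv2 : (Sum.inr ⟨i, m⟩ : SpiderVtx s kv) = spiderVtx kv i (m.val + 1) := by
            rw [vtx_pos kv i (m.val + 1) (by omega) m.isLt]
            exact congrArg Sum.inr (congrArg (Sigma.mk i) (Fin.ext (by simp)))
          constructor
          · -- spiderVtx kv i m.val ∉ S
            by_cases hm0 : m.val = 0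
            · rw [hm0, vtx_zero]; exact hu
            · rw [vtx_pos kv i m.val (by omega) (le_of_lt m.isLt)]
              intro hin
              have hmem : (⟨m.val - 1, by omega⟩ : Fin (kv i)) ∈
                  Finset.univ.filter (fun b : Fin (kv i) => Sum.inr ⟨i, b⟩ ∈ S) :=
                Finset.mem_filter.mpr ⟨Finset.mem_univ _, hin⟩
              have h7 : m ≤ (⟨m.val - 1, by omega⟩ : Fin (kv i)) :=
                Finset.min'_le _ _ hmem
              have h8 : m.val ≤ m.val - 1 := h7
              omega
          · rw [← hv2]; exact hmS
        · intro i hi j hj hij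
          simp only at hij
          split_ifs at hij <;> exact congrArg Sigma.fst hij
      have hTlb : n + A.card ≤ T.ncard := by
        have hcu : (T2 ∪ T3).ncard = n + T3.ncard := by
          rw [Set.ncard_union_eq hdisj (Set.toFinite _) (Set.toFinite _), hT2n]
        have hle2 : (T2 ∪ T3).ncard ≤ T.ncard :=
          Set.ncard_le_ncard (Set.union_subset hT2sub hT3sub) (Set.toFinite _)
        omega
      -- real arithmetic
      set c := A.card with hcdef
      have hTcR : (n:ℝ) + (c:ℝ) ≤ (T.ncard : ℝ) := by exact_mod_cast hTlb
      have hncR : (n:ℝ) ≤ (c:ℝ) * ((k:ℝ) - 1) := by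
        have : ((n:ℕ):ℝ) ≤ ((c * (k - 1) : ℕ) : ℝ) := by exact_mod_cast hnc
        rw [Nat.cast_mul, Nat.cast_sub (by omega : 1 ≤ k)] at this
        push_cast at this
        linarith
      have hcR : (1:ℝ) ≤ (c:ℝ) := by exact_mod_cast hc1
      have hs1 : (0:ℝ) ≤ (s:ℝ) - 1 := by
        have : (2:ℝ) ≤ (s:ℝ) := by exact_mod_cast hs
        linarith
      exact arith_caseB _ _ _ _ _ _ hKkR hTcR hncR hcR hs1 hBpos
end ExtremalSubdivision
end
end
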